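/- arXiv:0711.1291 — 4 statements merged into one kernel-verified Lean document; each statement's English description precedes it below -/
import Mathlib

section
/- With B = B(z,r) an open ball of positive measure and f ∈ L²(μ), the identity ∫_B T_ε(f χ_{B^c}) dμ = ∫_B T_ε(f) dμ + ∫_B (f - f_B) T_ε(χ_B) dμ holds for every ε > 0, where f_B = (1/μ(B)) ∫_B f dμ. -/
open MeasureTheory Metric Filter Set
open scoped ENNReal Topology

/-- Truncated singular integral operator `T_ε`. -/
noncomputable def Ttrunc {X : Type*} [MetricSpace X] [MeasurableSpace X]
    (μ : Measure X) (K : X → X → ℝ) (ε : ℝ) (f : X → ℝ) (x : X) : ℝ :=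
  ∫ y in (ball x ε)ᶜ, K x y * f y ∂μ

section Aux
variable {X : Type*} [MetricSpace X] [TopologicalSpace.SeparableSpace X]
  [SecondCountableTopology X] [MeasurableSpace X] [BorelSpace X]
  (μ : Measure X) [IsFiniteMeasure μ] (K : X → X → ℝ) (ε : ℝ)

noncomputable def Fker (u v : X → ℝ) : X × X → ℝ :=
  fun p => u p.1 * ({q : X × X | ε ≤ dist q.1 q.2}.indicator (fun q => K q.1 q.2) p * v p.2)

lemma measSet_dist : MeasurableSet {q : X × X | ε ≤ dist q.1 q.2} :=
  measurableSet_le measurable_const (continuous_fst.dist continuous_snd).measurable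

-- rewrite u x * Ttrunc v x as full-space integral of Fker
lemma Ttrunc_eq_Fker (u v : X → ℝ) (x : X) :
    u x * Ttrunc μ K ε v x = ∫ y, Fker K ε u v (x, y) ∂μ := by
  have h1 : Ttrunc μ K ε v x
      = ∫ y, ((ball x ε)ᶜ).indicator (fun y => K x y * v y) y ∂μ := by
    rw [integral_indicator measurableSet_ball.compl]; rfl
  have h2 : ∀ y, ((ball x ε)ᶜ).indicator (fun y => K x y * v y) y
      = {q : X × X | ε ≤ dist q.1 q.2}.indicator (fun q => K q.1 q.2) (x, y) * v y := by
    intro y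
    by_cases hy : ε ≤ dist x y
    · have hm1 : y ∈ (ball x ε)ᶜ := by
        simp only [mem_compl_iff, mem_ball, not_lt, dist_comm y x]; exact hy
      rw [Set.indicator_of_mem hm1,
        Set.indicator_of_mem (show (x, y) ∈ {q : X × X | ε ≤ dist q.1 q.2} from hy)]
    · have hm1 : y ∉ (ball x ε)ᶜ := by
        simp only [mem_compl_iff, mem_ball, not_lt, dist_comm y x]; exact hy
      rw [Set.indicator_of_notMem hm1,
        Set.indicator_of_notMem (show (x, y) ∉ {q : X × X | ε ≤ dist q.1 q.2} from hy),
        zero_mul]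
  rw [h1]
  simp_rw [h2]
  rw [← integral_const_mul]
  rfl

lemma Fker_integrable (hKmeas : Measurable (fun p : X × X => K p.1 p.2))
    (M : ℝ) (hM0 : 0 ≤ M) (hM : ∀ x y : X, ε ≤ dist x y → |K x y| ≤ M)
    (u v : X → ℝ) (hu : Integrable u μ) (hv : Integrable v μ) :
    Integrable (Fker K ε u v) (μ.prod μ) := by
  have hmeas : AEStronglyMeasurable (Fker K ε u v) (μ.prod μ) := by
    unfold Fker
    exact hu.1.comp_fst.mul (((hKmeas.indicator (measSet_dist ε)).aestronglyMeasurable).mul hv.1.comp_snd)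
  have hbound : Integrable (fun p : X × X => |u p.1| * (M * |v p.2|)) (μ.prod μ) :=
    hu.abs.mul_prod ((hv.abs).const_mul M)
  refine hbound.mono' hmeas ?_
  filter_upwards with p
  have hind : |{q : X × X | ε ≤ dist q.1 q.2}.indicator (fun q => K q.1 q.2) p| ≤ M := by
    by_cases hp : p ∈ {q : X × X | ε ≤ dist q.1 q.2}
    · rw [Set.indicator_of_mem hp]; exact hM _ _ hp
    · rw [Set.indicator_of_notMem hp]; simpa using hM0
  calc ‖Fker K ε u v p‖ = |u p.1| * (|{q : X × X | ε ≤ dist q.1 q.2}.indicator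
        (fun q => K q.1 q.2) p| * |v p.2|) := by
        simp [Fker, abs_mul, Real.norm_eq_abs, mul_assoc]
    _ ≤ |u p.1| * (M * |v p.2|) := by gcongr

lemma key_antisym (hKmeas : Measurable (fun p : X × X => K p.1 p.2))
    (hKanti : ∀ x y : X, x ≠ y → K x y = -K y x) (hε : 0 < ε)
    (M : ℝ) (hM0 : 0 ≤ M) (hM : ∀ x y : X, ε ≤ dist x y → |K x y| ≤ M)
    (u v : X → ℝ) (hu : Integrable u μ) (hv : Integrable v μ) :
    ∫ x, u x * Ttrunc μ K ε v x ∂μ = - ∫ y, v y * Ttrunc μ K ε u y ∂μ := by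
  have hFanti : ∀ x y : X, Fker K ε u v (x, y) = - Fker K ε v u (y, x) := by
    intro x y
    by_cases hxy : ε ≤ dist x y
    · have hyx : ε ≤ dist y x := by rwa [dist_comm]
      have hne : x ≠ y := by
        intro h; rw [h, dist_self] at hxy; linarith
      simp only [Fker, Set.indicator_of_mem (show (x,y) ∈ {q : X×X | ε ≤ dist q.1 q.2} from hxy),
        Set.indicator_of_mem (show (y,x) ∈ {q : X×X | ε ≤ dist q.1 q.2} from hyx)]
      rw [hKanti x y hne]; ring
    · have hyx : ¬ ε ≤ dist y x := by rwa [dist_comm]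
      simp only [Fker, Set.indicator_of_notMem
        (show (x,y) ∉ {q : X×X | ε ≤ dist q.1 q.2} from hxy),
        Set.indicator_of_notMem (show (y,x) ∉ {q : X×X | ε ≤ dist q.1 q.2} from hyx)]
      ring
  have hF : Integrable (Fker K ε u v) (μ.prod μ) :=
    Fker_integrable μ K ε hKmeas M hM0 hM u v hu hv
  calc ∫ x, u x * Ttrunc μ K ε v x ∂μ
      = ∫ x, ∫ y, Fker K ε u v (x, y) ∂μ ∂μ := by
        simp_rw [Ttrunc_eq_Fker]
    _ = ∫ y, ∫ x, Fker K ε u v (x, y) ∂μ ∂μ := integral_integral_swap hF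
    _ = ∫ y, ∫ x, - Fker K ε v u (y, x) ∂μ ∂μ := by simp_rw [hFanti]
    _ = - ∫ y, ∫ x, Fker K ε v u (y, x) ∂μ ∂μ := by
        simp_rw [integral_neg]
    _ = - ∫ y, v y * Ttrunc μ K ε u y ∂μ := by simp_rw [Ttrunc_eq_Fker]

lemma mul_Ttrunc_integrable (hKmeas : Measurable (fun p : X × X => K p.1 p.2))
    (M : ℝ) (hM0 : 0 ≤ M) (hM : ∀ x y : X, ε ≤ dist x y → |K x y| ≤ M)
    (u v : X → ℝ) (hu : Integrable u μ) (hv : Integrable v μ) :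
    Integrable (fun x => u x * Ttrunc μ K ε v x) μ := by
  have hF : Integrable (Fker K ε u v) (μ.prod μ) :=
    Fker_integrable μ K ε hKmeas M hM0 hM u v hu hv
  have := hF.integral_prod_left
  refine this.congr ?_
  filter_upwards with x
  exact (Ttrunc_eq_Fker μ K ε u v x).symm

end Aux


/-- for an open ball `B = B(z,r)` of positive measure,
`f ∈ L²(μ)` and every `ε > 0`,
`∫_B T_ε(f χ_{Bᶜ}) dμ = ∫_B T_ε(f) dμ + ∫_B (f - f_B) T_ε(χ_B) dμ`,
where `f_B = (1/μ(B)) ∫_B f dμ`. -/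
theorem truncated_ball_decomposition_identity
    {X : Type*} [MetricSpace X] [TopologicalSpace.SeparableSpace X]
    [MeasurableSpace X] [BorelSpace X]
    (μ : Measure X) [IsFiniteMeasure μ]
    (K : X → X → ℝ)
    (hKmeas : Measurable (fun p : X × X => K p.1 p.2))
    (hKanti : ∀ x y : X, x ≠ y → K x y = -K y x)
    (hKbdd : ∀ δ : ℝ, 0 < δ → ∃ M : ℝ, ∀ x y : X, δ < dist x y → |K x y| ≤ M)
    (z : X) (r : ℝ) (hpos : 0 < μ (ball z r))
    (f : X → ℝ) (hf : MemLp f 2 μ)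
    (ε : ℝ) (hε : 0 < ε) :
    ∫ x in ball z r, Ttrunc μ K ε ((ball z r)ᶜ.indicator f) x ∂μ =
      ∫ x in ball z r, Ttrunc μ K ε f x ∂μ +
      ∫ x in ball z r,
        (f x - ((μ (ball z r)).toReal)⁻¹ * ∫ y in ball z r, f y ∂μ) *
          Ttrunc μ K ε ((ball z r).indicator fun _ => (1 : ℝ)) x ∂μ := by
  haveI : SecondCountableTopology X := UniformSpace.secondCountable_of_separable X
  set B := ball z r with hB_def
  have hB : MeasurableSet B := measurableSet_ball
  set c : ℝ := ((μ B).toReal)⁻¹ * ∫ y in B, f y ∂μ with hc_def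
  set e : X → ℝ := B.indicator (fun _ => (1 : ℝ)) with he_def
  set g : X → ℝ := B.indicator f with hg_def
  have hfi : Integrable f μ := hf.integrable (by norm_num)
  have he : Integrable e μ := (integrable_const (1 : ℝ)).indicator hB
  have hg : Integrable g μ := hfi.indicator hB
  obtain ⟨M₀, hM₀⟩ := hKbdd (ε / 2) (by linarith)
  set M : ℝ := max M₀ 0 with hM_def
  have hM0 : (0 : ℝ) ≤ M := le_max_right _ _
  have hM : ∀ x y : X, ε ≤ dist x y → |K x y| ≤ M := fun x y h =>
    le_trans (hM₀ x y (by linarith)) (le_max_left _ _)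
  -- pointwise integrability of the truncated integrand
  have hinner : ∀ (v : X → ℝ), Integrable v μ → ∀ x : X,
      Integrable (fun y => K x y * v y) (μ.restrict (ball x ε)ᶜ) := by
    intro v hv x
    have hKm : Measurable fun y => K x y := hKmeas.comp measurable_prodMk_left
    refine Integrable.mono' ((hv.abs.const_mul M).restrict)
      ((hKm.aestronglyMeasurable.mul hv.1).restrict) ?_
    rw [ae_restrict_iff' measurableSet_ball.compl]
    filter_upwards with y hy
    have hdy : ε ≤ dist x y := by
      rw [dist_comm]; simpa [mem_ball, not_lt] using hy
    calc ‖K x y * v y‖ = |K x y| * |v y| := abs_mul _ _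
      _ ≤ M * |v y| := by
          have := hM x y hdy
          gcongr
  -- linearity of Ttrunc over the decomposition f = indicator Bᶜ f + indicator B f
  have hTsub : ∀ x : X, Ttrunc μ K ε (Bᶜ.indicator f) x
      = Ttrunc μ K ε f x - Ttrunc μ K ε g x := by
    intro x
    have hpt : ∀ y, K x y * (Bᶜ.indicator f) y = K x y * f y - K x y * g y := by
      intro y
      by_cases hy : y ∈ B
      · rw [Set.indicator_of_notMem (by simpa using hy), hg_def, Set.indicator_of_mem hy]
        ring
      · rw [Set.indicator_of_mem (by simpa using hy), hg_def, Set.indicator_of_notMem hy]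
        ring
    unfold Ttrunc
    simp_rw [hpt]
    exact integral_sub (hinner f hfi x) (hinner g hg x)
  -- key antisymmetry identities
  have K1 := key_antisym μ K ε hKmeas hKanti hε M hM0 hM e g he hg
  have K2 := key_antisym μ K ε hKmeas hKanti hε M hM0 hM e e he he
  have hK2 : ∫ x, e x * Ttrunc μ K ε e x ∂μ = 0 := by linarith
  -- integrabilities
  have J1 := mul_Ttrunc_integrable μ K ε hKmeas M hM0 hM e g he hg
  have J2 := mul_Ttrunc_integrable μ K ε hKmeas M hM0 hM e f he hfi
  have J3 := mul_Ttrunc_integrable μ K ε hKmeas M hM0 hM g e hg he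
  have J4 := mul_Ttrunc_integrable μ K ε hKmeas M hM0 hM e e he he
  -- set integrals as weighted whole-space integrals
  have hset : ∀ h : X → ℝ, ∫ x in B, h x ∂μ = ∫ x, e x * h x ∂μ := by
    intro h
    rw [← integral_indicator hB]
    congr 1; funext x
    by_cases hx : x ∈ B
    · rw [Set.indicator_of_mem hx, he_def, Set.indicator_of_mem hx]; ring
    · rw [Set.indicator_of_notMem hx, he_def, Set.indicator_of_notMem hx]; ring
  -- compute LHS
  have hLHS : ∫ x in B, Ttrunc μ K ε (Bᶜ.indicator f) x ∂μ
      = ∫ x, e x * Ttrunc μ K ε f x ∂μ + ∫ x, g x * Ttrunc μ K ε e x ∂μ := by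
    rw [hset]
    have : ∀ x, e x * Ttrunc μ K ε (Bᶜ.indicator f) x
        = e x * Ttrunc μ K ε f x - e x * Ttrunc μ K ε g x := by
      intro x; rw [hTsub x]; ring
    simp_rw [this]
    rw [integral_sub J2 J1, K1]
    ring
  -- compute third term of RHS
  have hthird : ∫ x in B, (f x - c) * Ttrunc μ K ε e x ∂μ
      = ∫ x, g x * Ttrunc μ K ε e x ∂μ := by
    rw [← integral_indicator hB]
    have hpt : ∀ x, B.indicator (fun x => (f x - c) * Ttrunc μ K ε e x) x
        = g x * Ttrunc μ K ε e x - c * (e x * Ttrunc μ K ε e x) := by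
      intro x
      by_cases hx : x ∈ B
      · rw [Set.indicator_of_mem hx, hg_def, Set.indicator_of_mem hx,
          he_def, Set.indicator_of_mem hx]
        ring
      · rw [Set.indicator_of_notMem hx, hg_def, Set.indicator_of_notMem hx,
          he_def, Set.indicator_of_notMem hx]
        ring
    simp_rw [hpt]
    rw [integral_sub J3 (J4.const_mul c), integral_const_mul, hK2]
    ring
  rw [hLHS, hset (fun x => Ttrunc μ K ε f x), hthird]
end

section
/- Let μ be a finite Borel measure on ℝⁿ and C > 2^{n+1} a constant. Define F to be the set of points a ∈ ℝⁿ for which there exists 0 < ε < 1 such that μ(B(a, 2^{1-k}ε)) ≥ C μ(B(a, 2^{-k}ε)) for all k = 0, 1, 2, .... Then μ(F) = 0. -/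
open MeasureTheory Metric Filter Set
open scoped ENNReal Topology
open scoped NNReal

/-- for a finite Borel measure `μ` on `ℝⁿ` and `C > 2^{n+1}`,
the set `F` of points `a` admitting some `0 < ε < 1` with
`μ(B(a, 2^{1-k}ε)) ≥ C μ(B(a, 2^{-k}ε))` for all `k ≥ 0` is `μ`-null. -/
theorem nondoubling_set_null (n : ℕ)
    (μ : Measure (EuclideanSpace ℝ (Fin n))) [IsFiniteMeasure μ]
    (C : ℝ) (hC : (2 : ℝ) ^ (n + 1) < C) :
    μ {a : EuclideanSpace ℝ (Fin n) |
        ∃ ε : ℝ, 0 < ε ∧ ε < 1 ∧ ∀ k : ℕ,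
          ENNReal.ofReal C * μ (ball a ((2 : ℝ) ^ (-(k : ℤ)) * ε)) ≤
            μ (ball a ((2 : ℝ) ^ (1 - (k : ℤ)) * ε))} = 0 := by
  set E := EuclideanSpace ℝ (Fin n)
  set F : Set E := {a : E |
        ∃ ε : ℝ, 0 < ε ∧ ε < 1 ∧ ∀ k : ℕ,
          ENNReal.ofReal C * μ (ball a ((2 : ℝ) ^ (-(k : ℤ)) * ε)) ≤
            μ (ball a ((2 : ℝ) ^ (1 - (k : ℤ)) * ε))} with hFdef
  have hCpos : (0 : ℝ) < C := lt_trans (by positivity) hC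
  have hC2n : (2 : ℝ) ^ n < C := lt_of_lt_of_le (by
    have : (2:ℝ)^n < 2^(n+1) := by
      apply pow_lt_pow_right₀ one_lt_two (Nat.lt_succ_self n)
    linarith) le_rfl
  have v1pos : 0 < volume (ball (0 : E) 1) := measure_ball_pos _ _ one_pos
  have v1lt : volume (ball (0 : E) 1) < ∞ := measure_ball_lt_top
  set v1 := volume (ball (0 : E) 1)
  -- the Besicovitch Vitali family for μ
  set v := Besicovitch.vitaliFamily μ with hv
  -- key: for any t > 0 and any x ∈ F, frequently μ a ≤ t * volume a
  have key : ∀ (t : ℝ≥0), 0 < t → ∀ x ∈ F,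
      ∃ᶠ a in v.filterAt x, μ a ≤ (t • volume) a := by
    intro t ht x hx
    obtain ⟨ε, hε0, hε1, hk⟩ := hx
    -- iterated inequality
    have hiter : ∀ k : ℕ, (ENNReal.ofReal C) ^ k * μ (ball x ((2:ℝ)^(-(k:ℤ)) * ε))
        ≤ μ (ball x ε) := by
      intro k
      induction k with
      | zero => simp
      | succ k ih =>
        have h1 := hk (k+1)
        have h2 : (1 - ((k+1 : ℕ) : ℤ)) = -(k : ℤ) := by push_cast; ring
        rw [h2] at h1
        calc (ENNReal.ofReal C) ^ (k+1) * μ (ball x ((2:ℝ)^(-((k+1:ℕ):ℤ)) * ε))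
            = (ENNReal.ofReal C) ^ k *
              (ENNReal.ofReal C * μ (ball x ((2:ℝ)^(-((k+1:ℕ):ℤ)) * ε))) := by ring
          _ ≤ (ENNReal.ofReal C) ^ k * μ (ball x ((2:ℝ)^(-(k:ℤ)) * ε)) :=
              mul_le_mul_right h1 _
          _ ≤ μ (ball x ε) := ih
    -- radii sequence
    set r : ℕ → ℝ := fun k => (2:ℝ)^(-(k:ℤ)-1) * ε with hr
    have hrk : ∀ k : ℕ, r k = ((2:ℝ)^(k+1))⁻¹ * ε := by
      intro k
      show (2:ℝ)^(-(k:ℤ)-1) * ε = _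
      rw [show (-(k:ℤ)-1) = -((k+1:ℕ):ℤ) by push_cast; ring, zpow_neg, zpow_natCast]
    have hrpos : ∀ k, 0 < r k := fun k => by rw [hrk]; positivity
    have hrtend : Tendsto r atTop (𝓝[>] (0:ℝ)) := by
      apply tendsto_nhdsWithin_of_tendsto_nhds_of_eventually_within
      · have : Tendsto (fun k : ℕ => (2:ℝ)^(-(k:ℤ)-1)) atTop (𝓝 0) := by
          have h := tendsto_pow_atTop_nhds_zero_of_lt_one (by norm_num : (0:ℝ) ≤ 1/2)
            (by norm_num : (1/2:ℝ) < 1)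
          have heq : (fun k : ℕ => (2:ℝ)^(-(k:ℤ)-1)) = fun k : ℕ => (1/2:ℝ)^k * (1/2) := by
            funext k
            rw [zpow_sub₀ (by norm_num), zpow_neg, ← zpow_natCast]
            norm_num
            rw [one_div, inv_pow]
            ring
          rw [heq]
          simpa using h.mul_const (1/2:ℝ)
        simpa using this.mul_const ε
      · exact Eventually.of_forall fun k => hrpos k
    have htendFilter : Tendsto (fun k => closedBall x (r k)) atTop (v.filterAt x) :=
      (Besicovitch.tendsto_filterAt μ x).comp hrtend
    -- eventual bound along the sequence
    have hM : μ (ball x ε) < ∞ := measure_lt_top _ _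
    have hCk0 : (ENNReal.ofReal C) ≠ 0 := by
      simp only [ne_eq, ENNReal.ofReal_eq_zero, not_le]; exact hCpos
    have hevent : ∀ᶠ k in atTop,
        μ (closedBall x (r k)) ≤ (t • volume) (closedBall x (r k)) := by
      set c : ℝ≥0∞ := (t : ℝ≥0∞) * ENNReal.ofReal (((2:ℝ)^n)⁻¹ * ε^n) * v1 with hc
      have hc0 : c ≠ 0 := by
        apply mul_ne_zero (mul_ne_zero _ _) v1pos.ne'
        · exact_mod_cast ht.ne'
        · simp only [ne_eq, ENNReal.ofReal_eq_zero, not_le]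
          positivity
      have hD : (1:ℝ) < C / 2^n := (one_lt_div (by positivity)).2 hC2n
      have htop : Tendsto (fun k : ℕ => ENNReal.ofReal ((C / 2^n)^k) * c) atTop (𝓝 ∞) := by
        have h1 : Tendsto (fun k : ℕ => ((C / 2^n)^k : ℝ)) atTop atTop :=
          tendsto_pow_atTop_atTop_of_one_lt hD
        have h2 : Tendsto (fun k : ℕ => ENNReal.ofReal ((C / 2^n)^k)) atTop (𝓝 ∞) :=
          ENNReal.tendsto_ofReal_atTop.comp h1
        have := ENNReal.Tendsto.mul_const (b := c) h2 (Or.inl ENNReal.top_ne_zero)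
        simpa [ENNReal.top_mul hc0] using this
      have hev : ∀ᶠ k in atTop, μ (ball x ε) ≤ ENNReal.ofReal ((C / 2^n)^k) * c :=
        htop.eventually_const_le hM
      filter_upwards [hev] with k hk2
      have hsub : closedBall x (r k) ⊆ ball x ((2:ℝ)^(-(k:ℤ)) * ε) := by
        apply closedBall_subset_ball
        apply mul_lt_mul_of_pos_right _ hε0
        rw [show (-(k:ℤ)-1) = -(k:ℤ)-1 from rfl]
        exact zpow_lt_zpow_right₀ one_lt_two (by omega)
      have hvol : (t • volume) (closedBall x (r k)) =
          (t:ℝ≥0∞) * (ENNReal.ofReal ((r k)^n) * v1) := by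
        rw [Measure.smul_apply,
          Measure.addHaar_closedBall _ _ (hrpos k).le]
        rw [show Module.finrank ℝ E = n from finrank_euclideanSpace_fin]
        simp [ENNReal.smul_def, mul_assoc, v1]
      have hkey : (ENNReal.ofReal C)^k * μ (ball x ((2:ℝ)^(-(k:ℤ)) * ε))
          ≤ (ENNReal.ofReal C)^k * ((t:ℝ≥0∞) * (ENNReal.ofReal ((r k)^n) * v1)) := by
        refine le_trans (hiter k) (le_trans hk2 (le_of_eq ?_))
        rw [hc]
        rw [show (ENNReal.ofReal C)^k * ((t:ℝ≥0∞) * (ENNReal.ofReal ((r k)^n) * v1))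
            = ((ENNReal.ofReal C)^k * ENNReal.ofReal ((r k)^n)) * ((t:ℝ≥0∞) * v1) by ring,
          show (t : ℝ≥0∞) * ENNReal.ofReal (((2:ℝ)^n)⁻¹ * ε^n) * v1 = ENNReal.ofReal (((2:ℝ)^n)⁻¹ * ε^n) * ((t:ℝ≥0∞) * v1) by ring,
          ← mul_assoc]
        congr 1
        rw [← ENNReal.ofReal_pow hCpos.le, ← ENNReal.ofReal_mul (by positivity),
          ← ENNReal.ofReal_mul (by positivity)]
        congr 1
        rw [hrk, div_pow, mul_pow, inv_pow, ← pow_mul, ← pow_mul]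
        field_simp
        ring
      calc μ (closedBall x (r k)) ≤ μ (ball x ((2:ℝ)^(-(k:ℤ)) * ε)) := measure_mono hsub
        _ ≤ (t:ℝ≥0∞) * (ENNReal.ofReal ((r k)^n) * v1) := by
            have hT : (ENNReal.ofReal C)^k ≠ ∞ := by
              exact ENNReal.pow_ne_top ENNReal.ofReal_ne_top
            exact (ENNReal.mul_le_mul_iff_right (pow_ne_zero _ hCk0) hT).1 hkey
        _ = (t • volume) (closedBall x (r k)) := hvol.symm
    exact htendFilter.frequently (hevent.frequently)
  -- conclude using Vitali
  have hbdd : ∀ R : ℕ, μ (F ∩ closedBall 0 R) = 0 := by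
    intro R
    have hle : ∀ (t : ℝ≥0), 0 < t →
        μ (F ∩ closedBall 0 R) ≤ (t : ℝ≥0∞) * volume (closedBall (0:E) R) := by
      intro t ht
      calc μ (F ∩ closedBall 0 R)
          ≤ (t • volume) (F ∩ closedBall 0 R) :=
            v.measure_le_of_frequently_le _ Measure.AbsolutelyContinuous.rfl _
              (fun x hx => key t ht x hx.1)
        _ ≤ (t : ℝ≥0∞) * volume (closedBall (0:E) R) := by
            rw [Measure.smul_apply, ENNReal.smul_def, smul_eq_mul]
            exact mul_le_mul_right (measure_mono inter_subset_right) _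
    refine le_antisymm ?_ zero_le
    refine ENNReal.le_of_forall_pos_le_add fun δ hδ _ => ?_
    rw [zero_add]
    set V := volume (closedBall (0:E) R)
    have hV : V < ∞ := measure_closedBall_lt_top
    set t : ℝ≥0 := δ / (V.toNNReal + 1)
    have ht : 0 < t := div_pos hδ (by positivity)
    calc μ (F ∩ closedBall 0 R) ≤ (t : ℝ≥0∞) * V := hle t ht
      _ ≤ (t : ℝ≥0∞) * (V.toNNReal + 1 : ℝ≥0) := by
          apply mul_le_mul_right
          calc V = (V.toNNReal : ℝ≥0∞) := (ENNReal.coe_toNNReal hV.ne).symm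
            _ ≤ ((V.toNNReal + 1 : ℝ≥0) : ℝ≥0∞) := by
                exact_mod_cast le_add_of_nonneg_right (zero_le_one)
      _ = ((t * (V.toNNReal + 1) : ℝ≥0) : ℝ≥0∞) := by rw [ENNReal.coe_mul]
      _ ≤ (δ : ℝ≥0∞) := by
          apply ENNReal.coe_le_coe.2
          rw [div_mul_cancel₀]
          positivity
  have hcover : F ⊆ ⋃ R : ℕ, F ∩ closedBall 0 R := by
    intro x hx
    exact mem_iUnion.2 ⟨⌈‖x‖⌉₊, hx, by
      simp [mem_closedBall, dist_zero_right]
      exact Nat.le_ceil _⟩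
  refine le_antisymm ?_ zero_le
  calc μ F ≤ μ (⋃ R : ℕ, F ∩ closedBall 0 R) := measure_mono hcover
    _ ≤ ∑' R : ℕ, μ (F ∩ closedBall 0 R) := measure_iUnion_le _
    _ = 0 := by simp [hbdd]
end

section
/- Let μ be a finite Borel measure on ℝⁿ and C > 2^{n+1}. Then for μ-almost every a and every 0 < ε < 1 there exists an integer k ≥ 0 such that μ(B(a, 2^{1-k}ε)) ≤ C μ(B(a, 2^{-k}ε)) and μ(B(a, 2^{-j}ε)) ≤ C^{-j} μ(B(a, ε)) for j = 0, …, k-1. -/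
open MeasureTheory Metric Filter Set
open scoped ENNReal NNReal Topology

/-- geometric decay along scales where doubling fails -/
private lemma chain_bound {X : Type*} [MeasurableSpace X] [PseudoMetricSpace X]
    (μ : Measure X) {C : ℝ} (hC : 0 < C) (a : X) (ε : ℝ) (j : ℕ)
    (h : ∀ i : ℕ, i < j →
      ENNReal.ofReal C * μ (ball a ((2:ℝ) ^ (-(i:ℤ) - 1) * ε)) <
        μ (ball a ((2:ℝ) ^ (-(i:ℤ)) * ε))) :
    μ (ball a ((2:ℝ) ^ (-(j:ℤ)) * ε)) ≤ (ENNReal.ofReal C)⁻¹ ^ j * μ (ball a ε) := by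
  induction j with
  | zero => simp
  | succ j ih =>
    have hC0 : ENNReal.ofReal C ≠ 0 := by
      simp [ENNReal.ofReal_eq_zero, not_le, hC]
    have hCt : ENNReal.ofReal C ≠ ∞ := ENNReal.ofReal_ne_top
    have hj := h j (Nat.lt_succ_self j)
    have e1 : (-((j+1:ℕ):ℤ)) = -(j:ℤ) - 1 := by push_cast; ring
    rw [e1]
    calc μ (ball a ((2:ℝ) ^ (-(j:ℤ) - 1) * ε))
        = (ENNReal.ofReal C)⁻¹ *
            (ENNReal.ofReal C * μ (ball a ((2:ℝ) ^ (-(j:ℤ) - 1) * ε))) := by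
          rw [← mul_assoc, ENNReal.inv_mul_cancel hC0 hCt, one_mul]
      _ ≤ (ENNReal.ofReal C)⁻¹ * μ (ball a ((2:ℝ) ^ (-(j:ℤ)) * ε)) := by
          exact mul_le_mul_right hj.le _
      _ ≤ (ENNReal.ofReal C)⁻¹ * ((ENNReal.ofReal C)⁻¹ ^ j * μ (ball a ε)) := by
          gcongr
          exact ih fun i hi => h i (hi.trans (Nat.lt_succ_self j))
      _ = (ENNReal.ofReal C)⁻¹ ^ (j+1) * μ (ball a ε) := by ring

/-- all-scale upper bound from scale-by-scale failure of doubling -/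
private lemma smallball_bound (n : ℕ) {X : Type*} [MeasurableSpace X] [PseudoMetricSpace X]
    (μ : Measure X) {C : ℝ} (hC2 : (2:ℝ) ^ (n+1) ≤ C) (a : X) {ε : ℝ} (hε : 0 < ε)
    (h : ∀ i : ℕ,
      ENNReal.ofReal C * μ (ball a ((2:ℝ) ^ (-(i:ℤ) - 1) * ε)) <
        μ (ball a ((2:ℝ) ^ (-(i:ℤ)) * ε)))
    {r : ℝ} (hr : 0 < r) (hrε : r ≤ ε) :
    μ (ball a r) ≤ ENNReal.ofReal ((2*r/ε) ^ (n+1)) * μ univ := by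
  have hC0 : (0:ℝ) < C := lt_of_lt_of_le (by positivity) hC2
  have hex : ∃ k : ℕ, (2:ℝ) ^ (-(k:ℤ) - 1) * ε < r := by
    obtain ⟨m, hm⟩ := exists_pow_lt_of_lt_one (div_pos hr hε) (by norm_num : (1/2:ℝ) < 1)
    refine ⟨m, ?_⟩
    have e : (2:ℝ) ^ (-(m:ℤ) - 1) = ((2:ℝ) ^ (m+1))⁻¹ := by
      rw [← zpow_natCast (2:ℝ) (m+1), ← zpow_neg]
      congr 1
      push_cast
      ring
    have h1 : ((2:ℝ) ^ (m+1))⁻¹ ≤ ((2:ℝ) ^ m)⁻¹ := by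
      gcongr <;> norm_num
    have h2 : ((2:ℝ) ^ m)⁻¹ = (1/2:ℝ) ^ m := by
      rw [one_div, inv_pow]
    have : (2:ℝ) ^ (-(m:ℤ) - 1) < r / ε := by
      rw [e]
      exact lt_of_le_of_lt (h1.trans h2.le) hm
    calc (2:ℝ) ^ (-(m:ℤ) - 1) * ε < (r/ε) * ε := by
          exact mul_lt_mul_of_pos_right this hε
      _ = r := div_mul_cancel₀ r hε.ne'
  classical
  let k := Nat.find hex
  have hk : (2:ℝ) ^ (-(k:ℤ) - 1) * ε < r := Nat.find_spec hex
  have hrk : r ≤ (2:ℝ) ^ (-(k:ℤ)) * ε := by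
    match hk' : k with
    | 0 => simpa using hrε
    | m+1 =>
      have := Nat.find_min hex (by omega : m < k)
      have e : (-((m+1:ℕ):ℤ)) = -(m:ℤ) - 1 := by push_cast; ring
      rw [e]
      linarith [not_lt.mp this]
  have step1 : μ (ball a r) ≤ (ENNReal.ofReal C)⁻¹ ^ k * μ (ball a ε) :=
    le_trans (measure_mono (ball_subset_ball hrk)) (chain_bound μ hC0 a ε k fun i _ => h i)
  have step2 : (ENNReal.ofReal C)⁻¹ ^ k ≤ ENNReal.ofReal (((2:ℝ) ^ (-(k:ℤ))) ^ (n+1)) := by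
    have i1 : (ENNReal.ofReal C)⁻¹ ≤ (ENNReal.ofReal ((2:ℝ) ^ (n+1)))⁻¹ := by
      gcongr
    have i2 : (ENNReal.ofReal ((2:ℝ) ^ (n+1)))⁻¹ = ENNReal.ofReal (((2:ℝ) ^ (n+1))⁻¹) :=
      (ENNReal.ofReal_inv_of_pos (by positivity)).symm
    calc (ENNReal.ofReal C)⁻¹ ^ k ≤ (ENNReal.ofReal (((2:ℝ) ^ (n+1))⁻¹)) ^ k := by
          rw [← i2]; exact pow_le_pow_left' i1 k
      _ = ENNReal.ofReal ((((2:ℝ) ^ (n+1))⁻¹) ^ k) := by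
          rw [← ENNReal.ofReal_pow (by positivity)]
      _ = ENNReal.ofReal (((2:ℝ) ^ (-(k:ℤ))) ^ (n+1)) := by
          congr 1
          rw [← zpow_natCast (2:ℝ) (n+1), ← zpow_neg, ← zpow_natCast ((2:ℝ) ^ (-((n+1:ℕ):ℤ))) k,
            ← zpow_mul, ← zpow_natCast ((2:ℝ) ^ (-(k:ℤ))) (n+1), ← zpow_mul]
          congr 1
          push_cast
          ring
  have step3 : ENNReal.ofReal (((2:ℝ) ^ (-(k:ℤ))) ^ (n+1)) ≤ ENNReal.ofReal ((2*r/ε) ^ (n+1)) := by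
    apply ENNReal.ofReal_le_ofReal
    apply pow_le_pow_left₀ (by positivity)
    have hlt : (2:ℝ) ^ (-(k:ℤ) - 1) < r / ε := by
      rw [lt_div_iff₀ hε]
      exact hk
    have e : (2:ℝ) ^ (-(k:ℤ)) = (2:ℝ) ^ (-(k:ℤ) - 1) * 2 := by
      rw [← zpow_add_one₀ (two_ne_zero : (2:ℝ) ≠ 0) (-(k:ℤ) - 1)]
      congr 1
      ring
    rw [e]
    calc (2:ℝ) ^ (-(k:ℤ) - 1) * 2 ≤ (r/ε) * 2 := by linarith
      _ = 2*r/ε := by ring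
  calc μ (ball a r) ≤ (ENNReal.ofReal C)⁻¹ ^ k * μ (ball a ε) := step1
    _ ≤ ENNReal.ofReal ((2*r/ε) ^ (n+1)) * μ univ := by
        exact mul_le_mul' (step2.trans step3) (measure_mono (subset_univ _))
private lemma eset_null (n : ℕ) (μ : Measure (EuclideanSpace ℝ (Fin n))) [IsFiniteMeasure μ]
    (M R : ℕ) :
    μ {a : EuclideanSpace ℝ (Fin n) | ‖a‖ ≤ R ∧ ∀ r : ℝ, 0 < r → r ≤ ((M:ℝ)+1)⁻¹ →
        μ (closedBall a r) ≤ ENNReal.ofReal (((M:ℝ)+1) * r ^ (n+1))} = 0 := by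
  set E := {a : EuclideanSpace ℝ (Fin n) | ‖a‖ ≤ R ∧ ∀ r : ℝ, 0 < r → r ≤ ((M:ℝ)+1)⁻¹ →
      μ (closedBall a r) ≤ ENNReal.ofReal (((M:ℝ)+1) * r ^ (n+1))} with hE
  set c : ℝ≥0∞ := volume (ball (0 : EuclideanSpace ℝ (Fin n)) 1) with hc
  have hc0 : 0 < c := measure_ball_pos _ _ one_pos
  have hct : c ≠ ∞ := measure_ball_lt_top.ne
  have hcr : 0 < c.toReal := ENNReal.toReal_pos hc0.ne' hct
  have key : ∀ δ : ℝ≥0, 0 < δ →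
      μ E ≤ (δ:ℝ≥0∞) * volume (closedBall (0 : EuclideanSpace ℝ (Fin n)) R) := by
    intro δ hδ
    have main := VitaliFamily.measure_le_of_frequently_le (v := Besicovitch.vitaliFamily μ)
      (ρ := μ) ((δ:ℝ≥0) • (volume : Measure (EuclideanSpace ℝ (Fin n))))
      Measure.AbsolutelyContinuous.rfl E ?_
    · calc μ E ≤ ((δ:ℝ≥0) • (volume : Measure (EuclideanSpace ℝ (Fin n)))) E := main
        _ ≤ ((δ:ℝ≥0) • (volume : Measure (EuclideanSpace ℝ (Fin n))))
            (closedBall (0 : EuclideanSpace ℝ (Fin n)) R) := by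
          apply measure_mono
          intro a ha
          simpa [mem_closedBall, dist_zero_right] using (hE ▸ ha).1
        _ = (δ:ℝ≥0∞) * volume (closedBall (0 : EuclideanSpace ℝ (Fin n)) R) := by
          rw [ENNReal.smul_def, Measure.smul_apply, smul_eq_mul]
    · intro x hx
      apply (Besicovitch.tendsto_filterAt μ x).frequently
      have hev : ∀ᶠ r in 𝓝[>] (0:ℝ), μ (closedBall x r) ≤
          ((δ:ℝ≥0) • (volume : Measure (EuclideanSpace ℝ (Fin n)))) (closedBall x r) := by
        have hr0 : (0:ℝ) < min (((M:ℝ)+1)⁻¹) ((δ:ℝ) * c.toReal / ((M:ℝ)+1)) := by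
          have : (0:ℝ) < (δ:ℝ) := hδ
          positivity
        filter_upwards [Ioc_mem_nhdsGT_of_mem ⟨le_refl (0:ℝ), hr0⟩] with r hr
        have hr1 : 0 < r := hr.1
        have hr2 : r ≤ ((M:ℝ)+1)⁻¹ := hr.2.trans (min_le_left _ _)
        have hr3 : r ≤ (δ:ℝ) * c.toReal / ((M:ℝ)+1) := hr.2.trans (min_le_right _ _)
        have h1 : μ (closedBall x r) ≤ ENNReal.ofReal (((M:ℝ)+1) * r ^ (n+1)) :=
          (hE ▸ hx).2 r hr1 hr2
        have h2 : ((M:ℝ)+1) * r ^ (n+1) ≤ (δ:ℝ) * (r ^ n * c.toReal) := by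
          have : ((M:ℝ)+1) * r ≤ (δ:ℝ) * c.toReal := by
            have := (le_div_iff₀ (by positivity : (0:ℝ) < (M:ℝ)+1)).1 hr3
            linarith
          calc ((M:ℝ)+1) * r ^ (n+1) = (((M:ℝ)+1) * r) * r ^ n := by ring
            _ ≤ ((δ:ℝ) * c.toReal) * r ^ n := by
                apply mul_le_mul_of_nonneg_right this (by positivity)
            _ = (δ:ℝ) * (r ^ n * c.toReal) := by ring
        have h3 : ((δ:ℝ≥0) • (volume : Measure (EuclideanSpace ℝ (Fin n)))) (closedBall x r)
            = (δ:ℝ≥0∞) * (ENNReal.ofReal (r ^ n) * c) := by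
          rw [ENNReal.smul_def, Measure.smul_apply, smul_eq_mul,
            Measure.addHaar_closedBall volume x hr1.le, finrank_euclideanSpace_fin]
        calc μ (closedBall x r) ≤ ENNReal.ofReal (((M:ℝ)+1) * r ^ (n+1)) := h1
          _ ≤ ENNReal.ofReal ((δ:ℝ) * (r ^ n * c.toReal)) := ENNReal.ofReal_le_ofReal h2
          _ = (δ:ℝ≥0∞) * (ENNReal.ofReal (r ^ n) * c) := by
              rw [ENNReal.ofReal_mul (by positivity), ENNReal.ofReal_mul (by positivity),
                ENNReal.ofReal_coe_nnreal, ENNReal.ofReal_toReal hct]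
          _ = ((δ:ℝ≥0) • (volume : Measure (EuclideanSpace ℝ (Fin n)))) (closedBall x r) :=
              h3.symm
      exact hev.frequently
  by_contra hne
  obtain ⟨δ, hδ0, hδ⟩ := ENNReal.exists_nnreal_pos_mul_lt
    (measure_closedBall_lt_top (μ := (volume : Measure (EuclideanSpace ℝ (Fin n))))
      (x := 0) (r := (R:ℝ))).ne hne
  exact absurd (key δ hδ0) (not_le.mpr hδ)

/-- for a finite Borel measure `μ` on `ℝⁿ` and `C > 2^{n+1}`,
for `μ`-a.e. `a` and every `0 < ε < 1` there is `k ≥ 0` with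
`μ(B(a, 2^{1-k}ε)) ≤ C μ(B(a, 2^{-k}ε))` and
`μ(B(a, 2^{-j}ε)) ≤ C^{-j} μ(B(a, ε))` for `j = 0, …, k-1`. -/
theorem ae_doubling_scale_exists (n : ℕ)
    (μ : Measure (EuclideanSpace ℝ (Fin n))) [IsFiniteMeasure μ]
    (C : ℝ) (hC : (2 : ℝ) ^ (n + 1) < C) :
    ∀ᵐ a ∂μ, ∀ ε : ℝ, 0 < ε → ε < 1 →
      ∃ k : ℕ,
        μ (ball a ((2 : ℝ) ^ (1 - (k : ℤ)) * ε)) ≤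
          ENNReal.ofReal C * μ (ball a ((2 : ℝ) ^ (-(k : ℤ)) * ε)) ∧
        ∀ j : ℕ, j < k →
          μ (ball a ((2 : ℝ) ^ (-(j : ℤ)) * ε)) ≤
            ENNReal.ofReal (C ^ (-(j : ℤ))) * μ (ball a ε) := by
  classical
  have hC0 : (0:ℝ) < C := lt_of_le_of_lt (by positivity) hC
  set Bad := {a : EuclideanSpace ℝ (Fin n) | ∃ ε : ℝ, 0 < ε ∧ ε < 1 ∧ ∀ i : ℕ,
      ENNReal.ofReal C * μ (ball a ((2:ℝ) ^ (-(i:ℤ) - 1) * ε)) <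
        μ (ball a ((2:ℝ) ^ (-(i:ℤ)) * ε))} with hBad
  have hnull : μ Bad = 0 := by
    have hsub : Bad ⊆ ⋃ (M : ℕ) (R : ℕ),
        {a : EuclideanSpace ℝ (Fin n) | ‖a‖ ≤ R ∧ ∀ r : ℝ, 0 < r → r ≤ ((M:ℝ)+1)⁻¹ →
          μ (closedBall a r) ≤ ENNReal.ofReal (((M:ℝ)+1) * r ^ (n+1))} := by
      rintro a ⟨ε, hε0, hε1, hb⟩
      set T := (μ univ).toReal with hT
      have hT0 : 0 ≤ T := ENNReal.toReal_nonneg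
      obtain ⟨M, hM⟩ := exists_nat_ge (max ((4/ε)^(n+1) * T) (2/ε))
      have hM1 : (4/ε)^(n+1) * T ≤ (M:ℝ) + 1 :=
        le_trans (le_max_left _ _) (by linarith)
      have hM2 : 2/ε ≤ (M:ℝ)+1 := le_trans (le_max_right _ _) (by linarith)
      refine mem_iUnion.2 ⟨M, mem_iUnion.2 ⟨Nat.ceil ‖a‖, Nat.le_ceil ‖a‖, ?_⟩⟩
      intro r hr1 hr2
      have hu : (0:ℝ) < (M:ℝ)+1 := by positivity
      have h2r : 0 < 2*r := by linarith
      have h2rε : 2*r ≤ ε := by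
        have e1 : 2 ≤ ((M:ℝ)+1) * ε := (div_le_iff₀ hε0).1 hM2
        have e2 : r * ((M:ℝ)+1) ≤ 1 := by
          calc r * ((M:ℝ)+1) ≤ ((M:ℝ)+1)⁻¹ * ((M:ℝ)+1) :=
                mul_le_mul_of_nonneg_right hr2 hu.le
            _ = 1 := inv_mul_cancel₀ hu.ne'
        nlinarith [hr1.le, hε0.le]
      have hsub2 : closedBall a r ⊆ ball a (2*r) := closedBall_subset_ball (by linarith)
      have hpow : (2*(2*r)/ε)^(n+1) = (4/ε)^(n+1) * r^(n+1) := by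
        rw [show 2*(2*r)/ε = (4/ε)*r from by ring, mul_pow]
      calc μ (closedBall a r) ≤ μ (ball a (2*r)) := measure_mono hsub2
        _ ≤ ENNReal.ofReal ((2*(2*r)/ε) ^ (n+1)) * μ univ :=
            smallball_bound n μ hC.le a hε0 hb h2r h2rε
        _ = ENNReal.ofReal ((2*(2*r)/ε) ^ (n+1) * T) := by
            rw [ENNReal.ofReal_mul (by positivity), hT,
              ENNReal.ofReal_toReal (measure_ne_top μ univ)]
        _ ≤ ENNReal.ofReal (((M:ℝ)+1) * r ^ (n+1)) := by
            apply ENNReal.ofReal_le_ofReal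
            rw [hpow]
            calc (4/ε)^(n+1) * r^(n+1) * T = ((4/ε)^(n+1) * T) * r^(n+1) := by ring
              _ ≤ ((M:ℝ)+1) * r^(n+1) :=
                  mul_le_mul_of_nonneg_right hM1 (by positivity)
    exact measure_mono_null hsub
      (measure_iUnion_null fun M => measure_iUnion_null fun R => eset_null n μ M R)
  filter_upwards [measure_eq_zero_iff_ae_notMem.1 hnull] with a ha
  intro ε hε0 hε1
  have hQ : ∃ k : ℕ, μ (ball a ((2:ℝ) ^ (1 - (k:ℤ)) * ε)) ≤
      ENNReal.ofReal C * μ (ball a ((2:ℝ) ^ (-(k:ℤ)) * ε)) := by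
    by_contra hno
    push_neg at hno
    apply ha
    refine ⟨ε, hε0, hε1, fun i => ?_⟩
    have hi := hno (i+1)
    have e1 : (1 - ((i+1:ℕ):ℤ)) = -(i:ℤ) := by push_cast; ring
    have e2 : (-((i+1:ℕ):ℤ)) = -(i:ℤ) - 1 := by push_cast; ring
    rw [e1, e2] at hi
    exact hi
  refine ⟨Nat.find hQ, Nat.find_spec hQ, ?_⟩
  intro j hj
  have hchain := chain_bound μ hC0 a ε j ?_
  · have e : ENNReal.ofReal (C ^ (-(j:ℤ))) = (ENNReal.ofReal C)⁻¹ ^ j := by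
      rw [show C ^ (-(j:ℤ)) = (C ^ j)⁻¹ from by rw [zpow_neg, zpow_natCast],
        ENNReal.ofReal_inv_of_pos (pow_pos hC0 j), ENNReal.ofReal_pow hC0.le, ← ENNReal.inv_pow]
    rw [e]
    exact hchain
  · intro i hi
    have hlt : i + 1 < Nat.find hQ := by omega
    have hmin := Nat.find_min hQ hlt
    rw [not_le] at hmin
    have e1 : (1 - ((i+1:ℕ):ℤ)) = -(i:ℤ) := by push_cast; ring
    have e2 : (-((i+1:ℕ):ℤ)) = -(i:ℤ) - 1 := by push_cast; ring
    rw [e1, e2] at hmin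
    exact hmin
end

section
/- Suppose the weak (1,1) inequality μ({x : T*(f)(x) > t}) ≤ C‖f‖₁/t holds. Let E ⊆ X be a closed set such that lim_{ε→0} T_ε(χ_E)(x) exists for μ-a.e. x ∈ E. Then for every t > 0, μ({x : limsup_{ε,δ→0} |T_ε(1)(x) - T_δ(1)(x)| > t}) ≤ 2C μ(X \ E)/t. Consequently, if such closed sets E_k exist with μ(X \ E_k) → 0, then lim_{ε→0} T_ε(1)(x) exists for μ-a.e. x ∈ X. -/
set_option linter.unusedSectionVars false
set_option linter.unusedVariables false
set_option maxHeartbeats 1000000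

open MeasureTheory Metric Filter Set
open scoped ENNReal Topology

/-- Maximal singular integral operator `T*`. -/
noncomputable def Tmax {X : Type*} [MetricSpace X] [MeasurableSpace X]
    (μ : Measure X) (K : X → X → ℝ) (f : X → ℝ) (x : X) : ℝ :=
  ⨆ ε : {e : ℝ // 0 < e}, |Ttrunc μ K ε f x|

section Helpers

variable {X : Type*} [MetricSpace X] [MeasurableSpace X] [BorelSpace X]
variable (μ : Measure X) [IsFiniteMeasure μ] (K : X → X → ℝ)

lemma SI_kernel_meas (hK : Measurable fun p : X × X => K p.1 p.2) (x : X) :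
    Measurable (K x) := hK.comp measurable_prodMk_left

lemma SI_bound_on_compl_ball
    (hKbdd : ∀ δ : ℝ, 0 < δ → ∃ M : ℝ, ∀ x y : X, δ < dist x y → |K x y| ≤ M)
    {δ : ℝ} (hδ : 0 < δ) :
    ∃ M : ℝ, 0 ≤ M ∧ ∀ (x : X) {f : X → ℝ}, (∀ y, |f y| ≤ 1) →
      ∀ y, δ ≤ dist x y → ‖K x y * f y‖ ≤ M := by
  obtain ⟨M, hM⟩ := hKbdd (δ/2) (by linarith)
  refine ⟨max M 0, le_max_right _ _, fun x f hfb y hd => ?_⟩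
  have hKb : |K x y| ≤ M := hM x y (by linarith)
  have : ‖K x y * f y‖ = |K x y| * |f y| := by rw [Real.norm_eq_abs, abs_mul]
  rw [this]
  calc |K x y| * |f y| ≤ M * 1 :=
        mul_le_mul hKb (hfb y) (abs_nonneg _) ((abs_nonneg _).trans hKb)
    _ ≤ max M 0 := by simp [le_max_iff]

lemma SI_integrableOn (hK : Measurable fun p : X × X => K p.1 p.2)
    (hKbdd : ∀ δ : ℝ, 0 < δ → ∃ M : ℝ, ∀ x y : X, δ < dist x y → |K x y| ≤ M)
    (x : X) {ε : ℝ} (hε : 0 < ε) {f : X → ℝ} (hf : Measurable f)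
    (hfb : ∀ y, |f y| ≤ 1) :
    IntegrableOn (fun y => K x y * f y) ((ball x ε)ᶜ) μ := by
  obtain ⟨M, hM0, hM⟩ := SI_bound_on_compl_ball K hKbdd hε
  have hmeas : AEStronglyMeasurable (fun y => K x y * f y) (μ.restrict ((ball x ε)ᶜ)) :=
    ((SI_kernel_meas K hK x).mul hf).aestronglyMeasurable
  refine Integrable.mono' (integrable_const M) hmeas ?_
  rw [ae_restrict_iff' measurableSet_ball.compl]
  refine ae_of_all _ fun y hy => ?_
  have hd : ε ≤ dist x y := by
    simp only [mem_compl_iff, mem_ball, not_lt] at hy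
    rwa [dist_comm]
  exact hM x hfb y hd

lemma SI_tail_bound
    (hK : Measurable fun p : X × X => K p.1 p.2)
    (hKbdd : ∀ δ : ℝ, 0 < δ → ∃ M : ℝ, ∀ x y : X, δ < dist x y → |K x y| ≤ M)
    {δ : ℝ} (hδ : 0 < δ) :
    ∃ B : ℝ, 0 ≤ B ∧ ∀ (x : X) (f : X → ℝ), Measurable f → (∀ y, |f y| ≤ 1) →
      ∀ ε, δ ≤ ε → |Ttrunc μ K ε f x| ≤ B := by
  obtain ⟨M, hM0, hM⟩ := SI_bound_on_compl_ball K hKbdd hδ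
  refine ⟨M * (μ univ).toReal, by positivity, ?_⟩
  intro x f hf hfb ε hε
  have h1 : ‖∫ y in (ball x ε)ᶜ, K x y * f y ∂μ‖ ≤ M * (μ ((ball x ε)ᶜ)).toReal := by
    refine norm_setIntegral_le_of_norm_le_const (measure_lt_top μ _) (fun y hy => ?_)
    have hd : ε ≤ dist x y := by
      simp only [mem_compl_iff, mem_ball, not_lt] at hy
      rwa [dist_comm]
    exact hM x hfb y (le_trans hε hd)
  rw [Ttrunc, ← Real.norm_eq_abs]
  refine h1.trans ?_
  have := ENNReal.toReal_mono (measure_ne_top μ univ) (measure_mono (subset_univ ((ball x ε)ᶜ)))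
  nlinarith

/-- refined bound: the truncated integral of an indicator supported on `S` is bounded by
`M * μ S` where `M` bounds the kernel off the `δ`-ball. -/
lemma SI_indicator_bound
    (hK : Measurable fun p : X × X => K p.1 p.2)
    {S : Set X} (hS : MeasurableSet S) (x : X) {ε : ℝ}
    {M : ℝ} (hM0 : 0 ≤ M) (hM : ∀ y, ε ≤ dist x y → |K x y| ≤ M) :
    |Ttrunc μ K ε (S.indicator fun _ => (1:ℝ)) x| ≤ M * (μ S).toReal := by
  have h0 : (fun y => K x y * S.indicator (fun _ => (1:ℝ)) y)
      = fun y => S.indicator (fun y => K x y) y := by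
    funext y
    by_cases hy : y ∈ S <;> simp [hy]
  rw [Ttrunc, h0, setIntegral_indicator hS, ← Real.norm_eq_abs]
  have h1 : ‖∫ y in (ball x ε)ᶜ ∩ S, K x y ∂μ‖ ≤ M * (μ ((ball x ε)ᶜ ∩ S)).toReal := by
    refine norm_setIntegral_le_of_norm_le_const (measure_lt_top μ _) (fun y hy => ?_)
    have hd : ε ≤ dist x y := by
      have := hy.1
      simp only [mem_compl_iff, mem_ball, not_lt] at this
      rwa [dist_comm]
    exact hM y hd
  refine h1.trans ?_
  have := ENNReal.toReal_mono (measure_ne_top μ S) (measure_mono (inter_subset_right :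
    (ball x ε)ᶜ ∩ S ⊆ S))
  nlinarith

lemma SI_Ttrunc_add (hK : Measurable fun p : X × X => K p.1 p.2)
    (hKbdd : ∀ δ : ℝ, 0 < δ → ∃ M : ℝ, ∀ x y : X, δ < dist x y → |K x y| ≤ M)
    (x : X) {ε : ℝ} (hε : 0 < ε) {f g : X → ℝ}
    (hf : Measurable f) (hfb : ∀ y, |f y| ≤ 1)
    (hg : Measurable g) (hgb : ∀ y, |g y| ≤ 1) :
    Ttrunc μ K ε (fun y => f y + g y) x = Ttrunc μ K ε f x + Ttrunc μ K ε g x := by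
  rw [Ttrunc, Ttrunc, Ttrunc]
  rw [← integral_add (SI_integrableOn μ K hK hKbdd x hε hf hfb)
    (SI_integrableOn μ K hK hKbdd x hε hg hgb)]
  congr 1
  funext y
  ring

lemma SI_indicator_bdd (S : Set X) : ∀ y, |S.indicator (fun _ => (1:ℝ)) y| ≤ 1 := by
  intro y
  by_cases hy : y ∈ S <;> simp [hy]

lemma SI_indicator_meas {S : Set X} (hS : MeasurableSet S) :
    Measurable (S.indicator fun _ => (1:ℝ)) := measurable_const.indicator hS

/-- decomposition of `1` as indicator sums. -/
lemma SI_one_decomp (hK : Measurable fun p : X × X => K p.1 p.2)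
    (hKbdd : ∀ δ : ℝ, 0 < δ → ∃ M : ℝ, ∀ x y : X, δ < dist x y → |K x y| ≤ M)
    (x : X) {ε : ℝ} (hε : 0 < ε) {S : Set X} (hS : MeasurableSet S) :
    Ttrunc μ K ε (fun _ => (1:ℝ)) x =
      Ttrunc μ K ε (S.indicator fun _ => (1:ℝ)) x +
      Ttrunc μ K ε (Sᶜ.indicator fun _ => (1:ℝ)) x := by
  have h1 : (fun _ : X => (1:ℝ)) = fun y =>
      S.indicator (fun _ => (1:ℝ)) y + Sᶜ.indicator (fun _ => (1:ℝ)) y := by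
    funext y
    by_cases hy : y ∈ S <;> simp [hy]
  have h2 := SI_Ttrunc_add μ K hK hKbdd x hε (SI_indicator_meas hS) (SI_indicator_bdd S)
    (SI_indicator_meas hS.compl) (SI_indicator_bdd Sᶜ)
  rw [← h1] at h2
  exact h2

lemma SI_measurable_Ttrunc [TopologicalSpace.SeparableSpace X]
    (hK : Measurable fun p : X × X => K p.1 p.2)
    (ε : ℝ) {f : X → ℝ} (hf : Measurable f) :
    Measurable (fun x => Ttrunc μ K ε f x) := by
  haveI : SecondCountableTopology X := UniformSpace.secondCountable_of_separable X
  have h1 : ∀ x, Ttrunc μ K ε f x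
      = ∫ y, ((ball x ε)ᶜ).indicator (fun y => K x y * f y) y ∂μ := by
    intro x
    rw [Ttrunc, integral_indicator measurableSet_ball.compl]
  have h2 : Measurable (fun p : X × X =>
      if ε ≤ dist p.2 p.1 then K p.1 p.2 * f p.2 else 0) := by
    refine Measurable.ite ?_ (hK.mul (hf.comp measurable_snd)) measurable_const
    exact measurableSet_le measurable_const (measurable_snd.dist measurable_fst)
  have h3 : StronglyMeasurable (fun x => ∫ y,
      (if ε ≤ dist y x then K x y * f y else 0) ∂μ) :=
    (h2.stronglyMeasurable).integral_prod_right'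
  have h4 : (fun x => Ttrunc μ K ε f x) = fun x => ∫ y,
      (if ε ≤ dist y x then K x y * f y else 0) ∂μ := by
    funext x
    rw [h1 x]
    congr 1
    funext y
    by_cases h : y ∈ (ball x ε)ᶜ
    · rw [Set.indicator_of_mem h, if_pos]
      simpa [mem_compl_iff, mem_ball, not_lt] using h
    · rw [Set.indicator_of_notMem h, if_neg]
      simpa [mem_compl_iff, mem_ball, not_lt] using h
  rw [h4]
  exact h3.measurable

lemma SI_rat_transfer
    (hK : Measurable fun p : X × X => K p.1 p.2)
    (hKbdd : ∀ δ : ℝ, 0 < δ → ∃ M : ℝ, ∀ x y : X, δ < dist x y → |K x y| ≤ M)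
    (x : X) {f : X → ℝ} (hf : Measurable f) (hfb : ∀ y, |f y| ≤ 1)
    {b : ℝ} (hb : ∀ q : ℚ, 0 < (q:ℝ) → |Ttrunc μ K (q:ℝ) f x| ≤ b)
    {δ : ℝ} (hδ : 0 < δ) : |Ttrunc μ K δ f x| ≤ b := by
  -- choose rationals qₙ ↑ δ with δ/2 < qₙ < δ
  have hex : ∀ n : ℕ, ∃ q : ℚ, max (δ/2) (δ - 1/(n+1)) < (q:ℝ) ∧ (q:ℝ) < δ := by
    intro n
    apply exists_rat_btwn
    rw [max_lt_iff]
    constructor <;> [linarith; ·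
      have : (0:ℝ) < 1/(n+1) := by positivity
      linarith]
  choose q hq1 hq2 using hex
  have hqpos : ∀ n, 0 < ((q n : ℚ) : ℝ) := fun n =>
    lt_of_le_of_lt (by linarith : (0:ℝ) ≤ δ/2) (lt_of_le_of_lt (le_max_left _ _) (hq1 n))
  have hqhalf : ∀ n, δ/2 < ((q n : ℚ) : ℝ) := fun n =>
    lt_of_le_of_lt (le_max_left _ _) (hq1 n)
  -- dominated convergence
  obtain ⟨M, hM⟩ := hKbdd (δ/4) (by linarith)
  set bound : X → ℝ := ((ball x (δ/2))ᶜ).indicator (fun y => |K x y|) with hbound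
  have hbound_int : Integrable bound μ := by
    rw [hbound, integrable_indicator_iff measurableSet_ball.compl]
    refine Integrable.mono' (integrable_const (max M 0))
      ((SI_kernel_meas K hK x).abs.aestronglyMeasurable) ?_
    rw [ae_restrict_iff' measurableSet_ball.compl]
    refine ae_of_all _ fun y hy => ?_
    have hd : δ/2 ≤ dist x y := by
      simp only [mem_compl_iff, mem_ball, not_lt] at hy
      rwa [dist_comm]
    have := hM x y (by linarith)
    rw [Real.norm_eq_abs, abs_abs]
    exact this.trans (le_max_left _ _)
  set F : ℕ → X → ℝ := fun n y =>
    ((ball x ((q n : ℚ) : ℝ))ᶜ).indicator (fun y => K x y * f y) y with hF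
  set G : X → ℝ := fun y => ((ball x δ)ᶜ).indicator (fun y => K x y * f y) y with hG
  have key : Tendsto (fun n => ∫ y, F n y ∂μ) atTop (𝓝 (∫ y, G y ∂μ)) := by
    refine tendsto_integral_of_dominated_convergence bound ?_ hbound_int ?_ ?_
    · intro n
      exact (((SI_kernel_meas K hK x).mul hf).indicator
        measurableSet_ball.compl).aestronglyMeasurable
    · intro n
      refine ae_of_all _ fun y => ?_
      show ‖(ball x ((q n : ℚ):ℝ))ᶜ.indicator (fun y => K x y * f y) y‖
        ≤ ((ball x (δ/2))ᶜ).indicator (fun y => |K x y|) y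
      by_cases hy : y ∈ (ball x ((q n : ℚ) : ℝ))ᶜ
      · rw [Set.indicator_of_mem hy]
        have hy2 : y ∈ (ball x (δ/2))ᶜ := by
          simp only [mem_compl_iff, mem_ball, not_lt] at hy ⊢
          exact le_trans (le_of_lt (hqhalf n)) hy
        rw [Set.indicator_of_mem hy2, Real.norm_eq_abs, abs_mul]
        calc |K x y| * |f y| ≤ |K x y| * 1 :=
              mul_le_mul_of_nonneg_left (hfb y) (abs_nonneg _)
          _ = |K x y| := mul_one _
      · rw [Set.indicator_of_notMem hy]
        simp only [norm_zero]
        by_cases hy2 : y ∈ (ball x (δ/2))ᶜ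
        · rw [Set.indicator_of_mem hy2]; exact abs_nonneg _
        · rw [Set.indicator_of_notMem hy2]
    · refine ae_of_all _ fun y => ?_
      by_cases hy : δ ≤ dist y x
      · have hmem : ∀ n, y ∈ (ball x ((q n : ℚ) : ℝ))ᶜ := by
          intro n
          simp only [mem_compl_iff, mem_ball, not_lt]
          exact le_trans (le_of_lt (hq2 n)) hy
        have hmemδ : y ∈ (ball x δ)ᶜ := by
          simp only [mem_compl_iff, mem_ball, not_lt]; exact hy
        have heq : ∀ n, F n y = G y := by
          intro n
          show (ball x ((q n : ℚ):ℝ))ᶜ.indicator (fun y => K x y * f y) y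
            = (ball x δ)ᶜ.indicator (fun y => K x y * f y) y
          rw [Set.indicator_of_mem (hmem n), Set.indicator_of_mem hmemδ]
        simp only [heq]
        exact tendsto_const_nhds
      · push_neg at hy
        have hGy : G y = 0 := by
          show (ball x δ)ᶜ.indicator (fun y => K x y * f y) y = 0
          rw [Set.indicator_of_notMem]
          simp only [mem_compl_iff, mem_ball, not_not]
          exact hy
        rw [hGy]
        have hev : ∀ᶠ n in atTop, F n y = 0 := by
          have h2 : Tendsto (fun n : ℕ => δ - 1/((n:ℝ)+1)) atTop (𝓝 δ) := by
            have := tendsto_one_div_add_atTop_nhds_zero_nat (𝕜 := ℝ)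
            have h3 := tendsto_const_nhds (x := δ) (f := atTop (α := ℕ)) |>.sub this
            simpa using h3
          have h4 : ∀ᶠ n : ℕ in atTop, dist y x < δ - 1/((n:ℝ)+1) :=
            h2.eventually_const_lt hy
          refine h4.mono fun n hn => ?_
          show (ball x ((q n : ℚ):ℝ))ᶜ.indicator (fun y => K x y * f y) y = 0
          rw [Set.indicator_of_notMem]
          simp only [mem_compl_iff, mem_ball, not_not]
          have := hq1 n
          have h5 : δ - 1/((n:ℝ)+1) ≤ ((q n : ℚ):ℝ) :=
            le_of_lt (lt_of_le_of_lt (le_max_right _ _) this)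
          linarith
        exact Tendsto.congr' (hev.mono fun n hn => hn.symm) tendsto_const_nhds
  have hTF : ∀ n, Ttrunc μ K ((q n : ℚ):ℝ) f x = ∫ y, F n y ∂μ := by
    intro n
    show _ = ∫ y, (ball x ((q n : ℚ):ℝ))ᶜ.indicator (fun y => K x y * f y) y ∂μ
    rw [Ttrunc, integral_indicator measurableSet_ball.compl]
  have hTG : Ttrunc μ K δ f x = ∫ y, G y ∂μ := by
    show _ = ∫ y, (ball x δ)ᶜ.indicator (fun y => K x y * f y) y ∂μ
    rw [Ttrunc, integral_indicator measurableSet_ball.compl]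
  have habs : Tendsto (fun n => |Ttrunc μ K ((q n : ℚ):ℝ) f x|) atTop
      (𝓝 |Ttrunc μ K δ f x|) := by
    rw [hTG]
    simp only [hTF]
    exact (continuous_abs.tendsto _).comp key
  exact le_of_tendsto habs (Eventually.of_forall fun n => hb (q n) (hqpos n))



/-- Off a closed set, the truncations of its indicator are eventually constant. -/
lemma SI_offE (hK : Measurable fun p : X × X => K p.1 p.2)
    {E : Set X} (hE : IsClosed E) {x : X} (hx : x ∉ E) :
    ∃ L : ℝ, Tendsto (fun ε : ℝ => Ttrunc μ K ε (E.indicator fun _ => (1:ℝ)) x)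
      (𝓝[>] 0) (𝓝 L) := by
  rcases eq_empty_or_nonempty E with hEe | hne
  · refine ⟨0, ?_⟩
    have : ∀ ε : ℝ, Ttrunc μ K ε (E.indicator fun _ => (1:ℝ)) x = 0 := by
      intro ε
      rw [Ttrunc]
      have : ∀ y : X, K x y * E.indicator (fun _ => (1:ℝ)) y = 0 := by
        intro y; rw [hEe]; simp
      simp only [this, integral_zero]
    simp only [this]
    exact tendsto_const_nhds
  · have hd : 0 < infDist x E := (hE.notMem_iff_infDist_pos hne).mp hx
    set d := infDist x E with hdd
    have hconst : ∀ ε ∈ Ioo (0:ℝ) d,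
        Ttrunc μ K ε (E.indicator fun _ => (1:ℝ)) x = ∫ y in E, K x y ∂μ := by
      intro ε hε
      have h0 : (fun y => K x y * E.indicator (fun _ => (1:ℝ)) y)
          = fun y => E.indicator (fun y => K x y) y := by
        funext y
        by_cases hy : y ∈ E <;> simp [hy]
      rw [Ttrunc, h0, setIntegral_indicator hE.measurableSet]
      have hinter : (ball x ε)ᶜ ∩ E = E := by
        rw [Set.inter_eq_right]
        intro y hy
        simp only [mem_compl_iff, mem_ball, not_lt]
        have := infDist_le_dist_of_mem (x := x) hy
        rw [dist_comm]
        exact le_trans (le_of_lt hε.2) this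
      rw [hinter]
    refine ⟨∫ y in E, K x y ∂μ, ?_⟩
    have hIoo : Ioo (0:ℝ) d ∈ 𝓝[>] (0:ℝ) := Ioo_mem_nhdsGT_of_mem ⟨le_refl 0, hd⟩
    refine Tendsto.congr' ?_ (tendsto_const_nhds)
    filter_upwards [hIoo] with ε hε
    exact (hconst ε hε).symm

/-- a.e. convergence of indicator truncations, from a.e. convergence on the closed set. -/
lemma SI_ae_conv (hK : Measurable fun p : X × X => K p.1 p.2)
    {E : Set X} (hE : IsClosed E)
    (hae : ∀ᵐ x ∂μ, x ∈ E → ∃ L : ℝ,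
      Tendsto (fun ε : ℝ => Ttrunc μ K ε (E.indicator fun _ => (1:ℝ)) x) (𝓝[>] 0) (𝓝 L)) :
    ∀ᵐ x ∂μ, ∃ L : ℝ,
      Tendsto (fun ε : ℝ => Ttrunc μ K ε (E.indicator fun _ => (1:ℝ)) x) (𝓝[>] 0) (𝓝 L) := by
  refine hae.mono fun x hx => ?_
  by_cases hxe : x ∈ E
  · exact hx hxe
  · exact SI_offE μ K hK hE hxe

/-- A function with convergent truncations has uniformly bounded truncations. -/
lemma SI_full_bound_of_tendsto
    (hK : Measurable fun p : X × X => K p.1 p.2)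
    (hKbdd : ∀ δ : ℝ, 0 < δ → ∃ M : ℝ, ∀ x y : X, δ < dist x y → |K x y| ≤ M)
    {x : X} {f : X → ℝ} (hf : Measurable f) (hfb : ∀ y, |f y| ≤ 1)
    (hconv : ∃ L : ℝ, Tendsto (fun ε : ℝ => Ttrunc μ K ε f x) (𝓝[>] 0) (𝓝 L)) :
    ∃ B : ℝ, ∀ δ : ℝ, 0 < δ → |Ttrunc μ K δ f x| ≤ B := by
  obtain ⟨L, hL⟩ := hconv
  have hev : ∀ᶠ ε in 𝓝[>] (0:ℝ), |Ttrunc μ K ε f x| ≤ |L| + 1 := by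
    have h1 : ∀ᶠ ε in 𝓝[>] (0:ℝ), dist (Ttrunc μ K ε f x) L < 1 :=
      hL (Metric.ball_mem_nhds L one_pos)
    refine h1.mono fun ε hε => ?_
    rw [Real.dist_eq] at hε
    calc |Ttrunc μ K ε f x| = |(Ttrunc μ K ε f x - L) + L| := by ring_nf
      _ ≤ |Ttrunc μ K ε f x - L| + |L| := abs_add_le _ _
      _ ≤ |L| + 1 := by linarith
  obtain ⟨c, hc, hsub⟩ := mem_nhdsGT_iff_exists_Ioo_subset.mp hev
  obtain ⟨B₂, hB₂0, hB₂⟩ := SI_tail_bound μ K hK hKbdd (half_pos hc)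
  refine ⟨max (|L| + 1) B₂, fun δ hδ => ?_⟩
  rcases lt_or_ge δ c with h | h
  · exact le_trans (hsub ⟨hδ, h⟩) (le_max_left _ _)
  · exact le_trans (hB₂ x f hf hfb δ (le_trans (le_of_lt (half_lt_self hc)) h))
      (le_max_right _ _)

/-- From a pointwise bound on all truncations, values are below `Tmax`. -/
lemma SI_le_Tmax {x : X} {f : X → ℝ} {B : ℝ}
    (hB : ∀ δ : ℝ, 0 < δ → |Ttrunc μ K δ f x| ≤ B) {ε : ℝ} (hε : 0 < ε) :
    |Ttrunc μ K ε f x| ≤ Tmax μ K f x := by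
  have hbdd : BddAbove (range fun e : {e : ℝ // 0 < e} => |Ttrunc μ K e f x|) := by
    refine ⟨B, ?_⟩
    rintro _ ⟨⟨δ, hδ⟩, rfl⟩
    exact hB δ hδ
  exact le_ciSup hbdd ⟨ε, hε⟩


lemma SI_part1_pointwise
    (hK : Measurable fun p : X × X => K p.1 p.2)
    (hKbdd : ∀ δ : ℝ, 0 < δ → ∃ M : ℝ, ∀ x y : X, δ < dist x y → |K x y| ≤ M)
    {E : Set X} (hE : IsClosed E) {x : X}
    (hconvE : ∃ L : ℝ, Tendsto (fun ε : ℝ =>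
      Ttrunc μ K ε (E.indicator fun _ => (1:ℝ)) x) (𝓝[>] 0) (𝓝 L))
    {t : ℝ} (ht : 0 < t)
    (hlim : t < Filter.limsup
      (fun p : ℝ × ℝ => |Ttrunc μ K p.1 (fun _ => (1:ℝ)) x -
        Ttrunc μ K p.2 (fun _ => (1:ℝ)) x|)
      ((𝓝[>] (0:ℝ)) ×ˢ (𝓝[>] (0:ℝ)))) :
    t/2 < Tmax μ K (Eᶜ.indicator fun _ => (1:ℝ)) x := by
  set P : Filter (ℝ × ℝ) := (𝓝[>] (0:ℝ)) ×ˢ (𝓝[>] (0:ℝ)) with hP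
  set u : ℝ × ℝ → ℝ := fun p => |Ttrunc μ K p.1 (fun _ => (1:ℝ)) x -
    Ttrunc μ K p.2 (fun _ => (1:ℝ)) x| with hu
  haveI hPne : P.NeBot := Filter.prod_neBot.mpr ⟨inferInstance, inferInstance⟩
  set S : Set ℝ := {a | ∀ᶠ p in P, u p ≤ a} with hSdef
  have hSne : S.Nonempty := by
    by_contra h
    rw [not_nonempty_iff_eq_empty] at h
    rw [Filter.limsup_eq, ← hSdef, h, Real.sInf_empty] at hlim
    linarith
  have hSbd : BddBelow S := by
    refine ⟨0, fun a ha => ?_⟩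
    obtain ⟨p, hp⟩ := Filter.Eventually.exists (show ∀ᶠ p in P, u p ≤ a from ha)
    exact le_trans (abs_nonneg _) hp
  obtain ⟨v, hv1, hv2⟩ := exists_between hlim
  have hfreq : ∃ᶠ p in P, v < u p := by
    by_contra h
    rw [not_frequently] at h
    have hvS : v ∈ S := h.mono fun p hp => not_lt.mp hp
    have : Filter.limsup u P ≤ v := by
      rw [Filter.limsup_eq]
      exact csInf_le hSbd hvS
    exact absurd hv2 (not_lt.mpr this)
  obtain ⟨L, hL⟩ := hconvE
  have hpair0 : Tendsto (fun p : ℝ × ℝ =>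
      Ttrunc μ K p.1 (E.indicator fun _ => (1:ℝ)) x -
      Ttrunc μ K p.2 (E.indicator fun _ => (1:ℝ)) x) P (𝓝 0) := by
    have h1 : Tendsto (fun p : ℝ × ℝ =>
        Ttrunc μ K p.1 (E.indicator fun _ => (1:ℝ)) x) P (𝓝 L) :=
      hL.comp tendsto_fst
    have h2 : Tendsto (fun p : ℝ × ℝ =>
        Ttrunc μ K p.2 (E.indicator fun _ => (1:ℝ)) x) P (𝓝 L) :=
      hL.comp tendsto_snd
    have := h1.sub h2
    rwa [sub_self] at this
  have hevE : ∀ᶠ p in P, |Ttrunc μ K p.1 (E.indicator fun _ => (1:ℝ)) x -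
      Ttrunc μ K p.2 (E.indicator fun _ => (1:ℝ)) x| < v - t := by
    have hball : ∀ᶠ z : ℝ in 𝓝 (0:ℝ), |z| < v - t := by
      refine Filter.eventually_of_mem
        (Metric.ball_mem_nhds (0:ℝ) (by linarith : (0:ℝ) < v - t)) (fun z hz => ?_)
      rwa [mem_ball_zero_iff, Real.norm_eq_abs] at hz
    exact hpair0.eventually hball
  have hpos : ∀ᶠ p : ℝ × ℝ in P, 0 < p.1 ∧ 0 < p.2 := by
    have ha : ∀ᶠ ε : ℝ in 𝓝[>] (0:ℝ), 0 < ε :=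
      eventually_mem_nhdsWithin.mono fun ε hε => hε
    exact (ha.prod_inl _).and (ha.prod_inr _)
  obtain ⟨p, hup, hEp, hp1, hp2⟩ := (hfreq.and_eventually (hevE.and hpos)).exists
  -- full bound for the `E`-part
  obtain ⟨BE, hBE⟩ := SI_full_bound_of_tendsto μ K hK hKbdd
    (SI_indicator_meas hE.measurableSet) (SI_indicator_bdd E) ⟨L, hL⟩
  -- decomposition
  have hdec : ∀ δ : ℝ, 0 < δ → Ttrunc μ K δ (fun _ => (1:ℝ)) x =
      Ttrunc μ K δ (E.indicator fun _ => (1:ℝ)) x +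
      Ttrunc μ K δ (Eᶜ.indicator fun _ => (1:ℝ)) x :=
    fun δ hδ => SI_one_decomp μ K hK hKbdd x hδ hE.measurableSet
  -- the oscillation of the complement part at `p` exceeds `t`
  have hosc : t < |Ttrunc μ K p.1 (Eᶜ.indicator fun _ => (1:ℝ)) x -
      Ttrunc μ K p.2 (Eᶜ.indicator fun _ => (1:ℝ)) x| := by
    have e1 := hdec p.1 hp1
    have e2 := hdec p.2 hp2
    have habs : u p ≤ |Ttrunc μ K p.1 (E.indicator fun _ => (1:ℝ)) x -
        Ttrunc μ K p.2 (E.indicator fun _ => (1:ℝ)) x| +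
        |Ttrunc μ K p.1 (Eᶜ.indicator fun _ => (1:ℝ)) x -
        Ttrunc μ K p.2 (Eᶜ.indicator fun _ => (1:ℝ)) x| := by
      rw [hu]
      simp only
      rw [e1, e2]
      have : (Ttrunc μ K p.1 (E.indicator fun _ => (1:ℝ)) x +
          Ttrunc μ K p.1 (Eᶜ.indicator fun _ => (1:ℝ)) x) -
          (Ttrunc μ K p.2 (E.indicator fun _ => (1:ℝ)) x +
          Ttrunc μ K p.2 (Eᶜ.indicator fun _ => (1:ℝ)) x)
          = (Ttrunc μ K p.1 (E.indicator fun _ => (1:ℝ)) x -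
          Ttrunc μ K p.2 (E.indicator fun _ => (1:ℝ)) x) +
          (Ttrunc μ K p.1 (Eᶜ.indicator fun _ => (1:ℝ)) x -
          Ttrunc μ K p.2 (Eᶜ.indicator fun _ => (1:ℝ)) x) := by ring
      rw [this]
      exact abs_add_le _ _
    have := hup
    linarith [habs, hEp]
  -- a bound for the complement-part family
  obtain ⟨a₀, ha₀⟩ := hSne
  have ha₀' : ∀ᶠ p in (𝓝[>] (0:ℝ)) ×ˢ (𝓝[>] (0:ℝ)), u p ≤ a₀ :=
    show ∀ᶠ p in P, u p ≤ a₀ from ha₀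
  rw [Filter.eventually_prod_iff] at ha₀'
  obtain ⟨pa, hpa, pb, hpb, himp⟩ := ha₀'
  obtain ⟨δ₀, hpbδ₀, hδ₀⟩ := (hpb.and
    (eventually_mem_nhdsWithin.mono fun ε (hε : ε ∈ Ioi (0:ℝ)) => hε)).exists
  have hT1bd : ∀ δ : ℝ, pa δ → |Ttrunc μ K δ (fun _ => (1:ℝ)) x| ≤
      |Ttrunc μ K δ₀ (fun _ => (1:ℝ)) x| + a₀ := by
    intro δ hδ
    have h5 : u (δ, δ₀) ≤ a₀ := himp hδ hpbδ₀
    rw [hu] at h5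
    simp only at h5
    have := abs_sub_abs_le_abs_sub (Ttrunc μ K δ (fun _ => (1:ℝ)) x)
      (Ttrunc μ K δ₀ (fun _ => (1:ℝ)) x)
    linarith
  obtain ⟨c₁, hc₁, hsub₁⟩ := mem_nhdsGT_iff_exists_Ioo_subset.mp hpa
  obtain ⟨B₃, hB₃0, hB₃⟩ := SI_tail_bound μ K hK hKbdd (half_pos hc₁)
  have hBc : ∀ δ : ℝ, 0 < δ →
      |Ttrunc μ K δ (Eᶜ.indicator fun _ => (1:ℝ)) x| ≤
      max (|Ttrunc μ K δ₀ (fun _ => (1:ℝ)) x| + a₀ + BE) B₃ := by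
    intro δ hδ
    rcases lt_or_ge δ c₁ with h | h
    · have hpaδ : pa δ := hsub₁ ⟨hδ, h⟩
      have h6 := hdec δ hδ
      have h7 : |Ttrunc μ K δ (Eᶜ.indicator fun _ => (1:ℝ)) x| ≤
          |Ttrunc μ K δ (fun _ => (1:ℝ)) x| +
          |Ttrunc μ K δ (E.indicator fun _ => (1:ℝ)) x| := by
        have : Ttrunc μ K δ (Eᶜ.indicator fun _ => (1:ℝ)) x =
            Ttrunc μ K δ (fun _ => (1:ℝ)) x -
            Ttrunc μ K δ (E.indicator fun _ => (1:ℝ)) x := by linarith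
        rw [this]
        exact abs_sub _ _
      have := hT1bd δ hpaδ
      have := hBE δ hδ
      refine le_trans ?_ (le_max_left _ _)
      linarith
    · refine le_trans (hB₃ x _ (SI_indicator_meas hE.measurableSet.compl)
        (SI_indicator_bdd Eᶜ) δ (by linarith)) (le_max_right _ _)
  -- conclude
  have hcases : t/2 < |Ttrunc μ K p.1 (Eᶜ.indicator fun _ => (1:ℝ)) x| ∨
      t/2 < |Ttrunc μ K p.2 (Eᶜ.indicator fun _ => (1:ℝ)) x| := by
    by_contra h
    push_neg at h
    have := abs_sub (Ttrunc μ K p.1 (Eᶜ.indicator fun _ => (1:ℝ)) x)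
      (Ttrunc μ K p.2 (Eᶜ.indicator fun _ => (1:ℝ)) x)
    linarith [h.1, h.2]
  rcases hcases with h | h
  · exact lt_of_lt_of_le h (SI_le_Tmax μ K hBc hp1)
  · exact lt_of_lt_of_le h (SI_le_Tmax μ K hBc hp2)


lemma SI_int_abs_indicator {S : Set X} (hS : MeasurableSet S) :
    ∫ x, |S.indicator (fun _ => (1:ℝ)) x| ∂μ = (μ S).toReal := by
  have h : (fun x => |S.indicator (fun _ => (1:ℝ)) x|) = S.indicator (fun _ => (1:ℝ)) := by
    funext y
    by_cases hy : y ∈ S <;> simp [hy]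
  rw [h, integral_indicator_const (1:ℝ) hS, smul_eq_mul, mul_one]
  rfl

lemma SI_weak_indicator {C : ℝ}
    (hweak : ∀ f : X → ℝ, Integrable f μ → ∀ t : ℝ, 0 < t →
      μ {x | t < Tmax μ K f x} ≤ ENNReal.ofReal (C * (∫ x, |f x| ∂μ) / t))
    {S : Set X} (hS : MeasurableSet S) {t : ℝ} (ht : 0 < t) :
    μ {x | t < Tmax μ K (S.indicator fun _ => (1:ℝ)) x} ≤
      ENNReal.ofReal (max C 0 * (μ S).toReal / t) := by
  have hint : Integrable (S.indicator fun _ => (1:ℝ)) μ := (integrable_const 1).indicator hS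
  refine le_trans (hweak _ hint t ht) (ENNReal.ofReal_le_ofReal ?_)
  rw [SI_int_abs_indicator μ hS]
  have h1 : C * (μ S).toReal ≤ max C 0 * (μ S).toReal :=
    mul_le_mul_of_nonneg_right (le_max_left _ _) ENNReal.toReal_nonneg
  gcongr

/-- Part 1 of the theorem, as a lemma. -/
lemma SI_part1
    (hK : Measurable fun p : X × X => K p.1 p.2)
    (hKbdd : ∀ δ : ℝ, 0 < δ → ∃ M : ℝ, ∀ x y : X, δ < dist x y → |K x y| ≤ M)
    {C : ℝ}
    (hweak : ∀ f : X → ℝ, Integrable f μ → ∀ t : ℝ, 0 < t →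
      μ {x | t < Tmax μ K f x} ≤ ENNReal.ofReal (C * (∫ x, |f x| ∂μ) / t))
    {E : Set X} (hE : IsClosed E)
    (hae : ∀ᵐ x ∂μ, x ∈ E → ∃ L : ℝ,
      Tendsto (fun ε : ℝ => Ttrunc μ K ε (E.indicator fun _ => (1:ℝ)) x) (𝓝[>] 0) (𝓝 L))
    {t : ℝ} (ht : 0 < t) :
    μ {x | t < Filter.limsup
        (fun p : ℝ × ℝ =>
          |Ttrunc μ K p.1 (fun _ => (1 : ℝ)) x -
            Ttrunc μ K p.2 (fun _ => (1 : ℝ)) x|)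
        ((𝓝[>] (0 : ℝ)) ×ˢ (𝓝[>] (0 : ℝ)))} ≤
      ENNReal.ofReal (2 * C * (μ Eᶜ).toReal / t) := by
  have hgood := SI_ae_conv μ K hK hE hae
  rw [ae_iff] at hgood
  have hincl : {x | t < Filter.limsup
      (fun p : ℝ × ℝ =>
        |Ttrunc μ K p.1 (fun _ => (1 : ℝ)) x -
          Ttrunc μ K p.2 (fun _ => (1 : ℝ)) x|)
      ((𝓝[>] (0 : ℝ)) ×ˢ (𝓝[>] (0 : ℝ)))} ⊆
      {x | ¬ ∃ L : ℝ, Tendsto (fun ε : ℝ =>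
        Ttrunc μ K ε (E.indicator fun _ => (1:ℝ)) x) (𝓝[>] 0) (𝓝 L)} ∪
      {x | t/2 < Tmax μ K (Eᶜ.indicator fun _ => (1:ℝ)) x} := by
    intro x hx
    by_cases hGx : ∃ L : ℝ, Tendsto (fun ε : ℝ =>
        Ttrunc μ K ε (E.indicator fun _ => (1:ℝ)) x) (𝓝[>] 0) (𝓝 L)
    · exact Or.inr (SI_part1_pointwise μ K hK hKbdd hE hGx ht hx)
    · exact Or.inl hGx
  refine le_trans (measure_mono hincl) (le_trans (measure_union_le _ _) ?_)
  rw [hgood, zero_add]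
  refine le_trans (SI_weak_indicator μ K hweak hE.measurableSet.compl (half_pos ht)) ?_
  rcases le_or_gt 0 C with hC | hC
  · rw [max_eq_left hC]
    refine le_of_eq (congrArg ENNReal.ofReal ?_)
    field_simp
  · rw [max_eq_right (le_of_lt hC)]
    rw [zero_mul, zero_div, ENNReal.ofReal_zero]
    exact zero_le


/-- On `E` itself, the set where the rational truncations of `χ_{Eᶜ}` are unbounded is null. -/
lemma SI_unbounded_null [TopologicalSpace.SeparableSpace X]
    (hK : Measurable fun p : X × X => K p.1 p.2)
    (hKbdd : ∀ δ : ℝ, 0 < δ → ∃ M : ℝ, ∀ x y : X, δ < dist x y → |K x y| ≤ M)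
    {C : ℝ}
    (hweak : ∀ f : X → ℝ, Integrable f μ → ∀ t : ℝ, 0 < t →
      μ {x | t < Tmax μ K f x} ≤ ENNReal.ofReal (C * (∫ x, |f x| ∂μ) / t))
    {E : Set X} (hE : IsClosed E) :
    μ ({x | ∀ b : ℕ, ∃ q : ℚ, 0 < (q:ℝ) ∧
        (b:ℝ) < |Ttrunc μ K (q:ℝ) (Eᶜ.indicator fun _ => (1:ℝ)) x|} ∩ E) = 0 := by
  set g : X → ℝ := Eᶜ.indicator (fun _ => (1:ℝ)) with hgdef
  have hgmeas : Measurable g := SI_indicator_meas hE.measurableSet.compl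
  have hgbdd : ∀ y, |g y| ≤ 1 := SI_indicator_bdd Eᶜ
  set D : Set X := {x | ∀ b : ℕ, ∃ q : ℚ, 0 < (q:ℝ) ∧
      (b:ℝ) < |Ttrunc μ K (q:ℝ) g x|} ∩ E with hDdef
  have hTmeas : ∀ q : ℚ, Measurable (fun x => Ttrunc μ K (q:ℝ) g x) :=
    fun q => SI_measurable_Ttrunc μ K hK (q:ℝ) hgmeas
  have hDmeas : MeasurableSet D := by
    have h1 : {x : X | ∀ b : ℕ, ∃ q : ℚ, 0 < (q:ℝ) ∧
        (b:ℝ) < |Ttrunc μ K (q:ℝ) g x|}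
        = ⋂ b : ℕ, ⋃ q : ℚ, ⋃ (_ : 0 < (q:ℝ)), {x | (b:ℝ) < |Ttrunc μ K (q:ℝ) g x|} := by
      ext x
      simp only [mem_setOf_eq, mem_iInter, mem_iUnion]
      constructor
      · intro h b; obtain ⟨q, hq1, hq2⟩ := h b; exact ⟨q, hq1, hq2⟩
      · intro h b; obtain ⟨q, hq1, hq2⟩ := h b; exact ⟨q, hq1, hq2⟩
    rw [hDdef, h1]
    refine MeasurableSet.inter ?_ hE.measurableSet
    refine MeasurableSet.iInter fun b => MeasurableSet.iUnion fun q =>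
      MeasurableSet.iUnion fun _ => ?_
    exact measurableSet_lt measurable_const (hTmeas q).abs
  by_contra hpos0
  obtain ⟨B₁, hB₁0, hB₁⟩ := SI_tail_bound μ K hK hKbdd one_pos
  set b₀ : ℕ := ⌈B₁⌉₊ with hb₀
  have key : ∀ b : ℕ, b₀ ≤ b →
      μ D / 2 ≤ ENNReal.ofReal (max C 0 * (μ univ).toReal / ((b:ℝ)+1)) := by
    intro b hb
    -- every point of D has a rational witness in (0, 1]
    have hwit : ∀ x ∈ D, ∃ q : ℚ, 0 < (q:ℝ) ∧ (q:ℝ) ≤ 1 ∧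
        (b:ℝ) + 2 < |Ttrunc μ K (q:ℝ) g x| := by
      intro x hx
      obtain ⟨q, hq1, hq2⟩ := hx.1 (b + 2)
      push_cast at hq2
      refine ⟨q, hq1, ?_, hq2⟩
      by_contra hq3
      push_neg at hq3
      have := hB₁ x g hgmeas hgbdd (q:ℝ) (le_of_lt hq3)
      have hcast : B₁ ≤ (b₀:ℝ) := Nat.le_ceil B₁
      have hbb : (b₀:ℝ) ≤ (b:ℝ) := Nat.cast_le.mpr hb
      linarith
    -- exhaust by a monotone union over minimal witness sizes
    set Dn : ℕ → Set X := fun n => D ∩ {x | ∃ q : ℚ,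
      (1/((n:ℝ)+1) ≤ (q:ℝ) ∧ (q:ℝ) ≤ 1) ∧ (b:ℝ) + 2 < |Ttrunc μ K (q:ℝ) g x|} with hDn
    have hDnmono : Monotone Dn := by
      intro n m hnm x hx
      refine ⟨hx.1, ?_⟩
      obtain ⟨q, ⟨hq1, hq2⟩, hq3⟩ := hx.2
      refine ⟨q, ⟨le_trans ?_ hq1, hq2⟩, hq3⟩
      have h1 : (0:ℝ) < (n:ℝ) + 1 := by positivity
      have h2 : (n:ℝ) + 1 ≤ (m:ℝ) + 1 := by
        have := (Nat.cast_le (α := ℝ)).mpr hnm; linarith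
      exact one_div_le_one_div_of_le h1 h2
    have hcover : D = ⋃ n, Dn n := by
      ext x
      simp only [mem_iUnion]
      constructor
      · intro hx
        obtain ⟨q, hq1, hq2, hq3⟩ := hwit x hx
        obtain ⟨n, hn⟩ := exists_nat_one_div_lt hq1
        refine ⟨n, Set.mem_inter hx ?_⟩
        exact ⟨q, ⟨le_of_lt hn, hq2⟩, hq3⟩
      · rintro ⟨n, hn⟩
        exact Set.mem_of_mem_inter_left hn
    have hiSup : μ D = ⨆ n, μ (Dn n) := by
      rw [hcover]
      exact hDnmono.measure_iUnion
    have hhalf : μ D / 2 < μ D := ENNReal.half_lt_self hpos0 (measure_ne_top μ D)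
    have hexn : ∃ n, μ D / 2 < μ (Dn n) := by
      refine lt_iSup_iff.mp ?_
      rw [← hiSup]
      exact hhalf
    obtain ⟨n, hn⟩ := hexn
    set r : ℝ := 1/((n:ℝ)+1) with hrdef
    have hr : 0 < r := by rw [hrdef]; positivity
    obtain ⟨Mr', hMr'⟩ := hKbdd (r/2) (by linarith)
    set Mr : ℝ := max Mr' 0 + 1 with hMrdef
    have hMrpos : 0 < Mr := by
      rw [hMrdef]
      have : (0:ℝ) ≤ max Mr' 0 := le_max_right _ _
      linarith
    -- outer regularity
    have hlt : μ D < μ D + ENNReal.ofReal (1/Mr) :=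
      ENNReal.lt_add_right (measure_ne_top μ D)
        (ne_of_gt (ENNReal.ofReal_pos.mpr (by positivity)))
    obtain ⟨V, hDV, hVopen, hμV⟩ := Set.exists_isOpen_lt_of_lt D _ hlt
    have hVc : μ (V ∩ Eᶜ) ≤ ENNReal.ofReal (1/Mr) := by
      have h1 : V ∩ Eᶜ ⊆ V \ D := by
        intro y hy
        exact ⟨hy.1, fun hyD => hy.2 hyD.2⟩
      refine le_trans (measure_mono h1) ?_
      rw [measure_diff hDV hDmeas.nullMeasurableSet (measure_ne_top μ D)]
      exact tsub_le_iff_right.mpr (by rw [add_comm]; exact le_of_lt hμV)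
    have hVcr : (μ (V ∩ Eᶜ)).toReal ≤ 1/Mr :=
      ENNReal.toReal_le_of_le_ofReal (by positivity) hVc
    -- the test function
    set f : X → ℝ := (Eᶜ \ V).indicator (fun _ => (1:ℝ)) with hfdef
    have hfSmeas : MeasurableSet (Eᶜ \ V) :=
      hE.measurableSet.compl.diff hVopen.measurableSet
    have hfmeas : Measurable f := SI_indicator_meas hfSmeas
    have hfbdd : ∀ y, |f y| ≤ 1 := SI_indicator_bdd _
    set h : X → ℝ := (Eᶜ ∩ V).indicator (fun _ => (1:ℝ)) with hhdef
    have hhSmeas : MeasurableSet (Eᶜ ∩ V) :=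
      hE.measurableSet.compl.inter hVopen.measurableSet
    have hhmeas : Measurable h := SI_indicator_meas hhSmeas
    have hhbdd : ∀ y, |h y| ≤ 1 := SI_indicator_bdd _
    have hgfh : ∀ y, g y = f y + h y := by
      intro y
      rw [hgdef, hfdef, hhdef]
      by_cases h1 : y ∈ Eᶜ
      · by_cases h2 : y ∈ V
        · rw [Set.indicator_of_mem h1, Set.indicator_of_notMem (fun hc => hc.2 h2),
            Set.indicator_of_mem (Set.mem_inter h1 h2)]
          norm_num
        · rw [Set.indicator_of_mem h1,
            Set.indicator_of_mem (show y ∈ Eᶜ \ V from Set.mem_diff_of_mem h1 h2),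
            Set.indicator_of_notMem (fun hc => h2 hc.2)]
          norm_num
      · rw [Set.indicator_of_notMem h1, Set.indicator_of_notMem (fun hc => h1 hc.1),
          Set.indicator_of_notMem (fun hc => h1 hc.1)]
        norm_num
    -- the inclusion
    have hincl : Dn n ⊆ {x | (b:ℝ) + 1 < Tmax μ K f x} := by
      intro x hx
      have hxD : x ∈ D := Set.mem_of_mem_inter_left hx
      obtain ⟨q, ⟨hqr, hq1⟩, hqval⟩ := Set.mem_of_mem_inter_right hx
      have hq0 : 0 < (q:ℝ) := lt_of_lt_of_le hr hqr
      -- kernel bound at scale r at this point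
      have hMrbd : ∀ y : X, (q:ℝ) ≤ dist x y → |K x y| ≤ Mr := by
        intro y hy
        have := hMr' x y (by linarith [le_trans hqr hy])
        rw [hMrdef]
        have h2 : Mr' ≤ max Mr' 0 := le_max_left _ _
        linarith
      -- smallness of the difference part
      have hhsmall : |Ttrunc μ K (q:ℝ) h x| ≤ 1 := by
        have := SI_indicator_bound μ K hK hhSmeas x (le_of_lt hMrpos) hMrbd
        have h2 : (μ (Eᶜ ∩ V)).toReal ≤ 1/Mr := by
          rw [Set.inter_comm]; exact hVcr
        calc |Ttrunc μ K (q:ℝ) h x| ≤ Mr * (μ (Eᶜ ∩ V)).toReal := this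
          _ ≤ Mr * (1/Mr) := mul_le_mul_of_nonneg_left h2 (le_of_lt hMrpos)
          _ = 1 := by field_simp
      -- decomposition at scale q
      have hdecq : Ttrunc μ K (q:ℝ) g x =
          Ttrunc μ K (q:ℝ) f x + Ttrunc μ K (q:ℝ) h x := by
        have h1 : Ttrunc μ K (q:ℝ) g x = Ttrunc μ K (q:ℝ) (fun y => f y + h y) x := by
          congr 1
          funext y
          exact hgfh y
        rw [h1]
        exact SI_Ttrunc_add μ K hK hKbdd x hq0 hfmeas hfbdd hhmeas hhbdd
      have hfbig : (b:ℝ) + 1 < |Ttrunc μ K (q:ℝ) f x| := by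
        have := abs_sub_abs_le_abs_sub (Ttrunc μ K (q:ℝ) g x) (Ttrunc μ K (q:ℝ) h x)
        have h2 : Ttrunc μ K (q:ℝ) g x - Ttrunc μ K (q:ℝ) h x = Ttrunc μ K (q:ℝ) f x := by
          linarith [hdecq]
        rw [h2] at this
        linarith
      -- boundedness of the family of `f` at `x`
      have hρ : ∃ ρ : ℝ, 0 < ρ ∧ ball x ρ ⊆ V :=
        Metric.isOpen_iff.mp hVopen x (hDV hxD)
      obtain ⟨ρ, hρ0, hρV⟩ := hρ
      have hconst : ∀ δ : ℝ, 0 < δ → δ ≤ ρ →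
          Ttrunc μ K δ f x = Ttrunc μ K ρ f x := by
        intro δ hδ0 hδρ
        rw [Ttrunc, Ttrunc]
        have hsplit : (ball x δ)ᶜ = (ball x ρ)ᶜ ∪ (ball x ρ \ ball x δ) := by
          ext y
          simp only [mem_compl_iff, mem_union, mem_diff, mem_ball]
          constructor
          · intro hy
            by_cases h2 : dist y x < ρ
            · exact Or.inr ⟨h2, hy⟩
            · exact Or.inl h2
          · rintro (hy | ⟨hy1, hy2⟩)
            · intro hc; exact hy (lt_of_lt_of_le hc hδρ)
            · exact hy2
        have hdisj : Disjoint ((ball x ρ)ᶜ) (ball x ρ \ ball x δ) :=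
          disjoint_compl_left.mono_right diff_subset
        have hint1 : IntegrableOn (fun y => K x y * f y) ((ball x ρ)ᶜ) μ :=
          SI_integrableOn μ K hK hKbdd x (lt_of_lt_of_le hδ0 hδρ) hfmeas hfbdd
        have hint2 : IntegrableOn (fun y => K x y * f y) (ball x ρ \ ball x δ) μ := by
          refine (SI_integrableOn μ K hK hKbdd x hδ0 hfmeas hfbdd).mono_set ?_
          intro y hy
          simp only [mem_compl_iff, mem_ball]
          exact fun hc => hy.2 (by simpa [mem_ball] using hc)
        rw [hsplit, setIntegral_union hdisj
          (measurableSet_ball.diff measurableSet_ball) hint1 hint2]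
        have hzero : ∫ y in (ball x ρ \ ball x δ), K x y * f y ∂μ = 0 := by
          have hz : ∀ y ∈ ball x ρ \ ball x δ, K x y * f y = 0 := by
            intro y hy
            have hyV : y ∈ V := hρV hy.1
            rw [hfdef, Set.indicator_of_notMem (fun hc => hc.2 hyV), mul_zero]
          rw [setIntegral_congr_fun (measurableSet_ball.diff measurableSet_ball) hz]
          exact integral_zero _ _
        rw [hzero, add_zero]
      obtain ⟨Bρ, hBρ0, hBρ⟩ := SI_tail_bound μ K hK hKbdd hρ0
      have hBf : ∀ δ : ℝ, 0 < δ → |Ttrunc μ K δ f x| ≤ Bρ := by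
        intro δ hδ0
        rcases le_or_gt δ ρ with hc | hc
        · rw [hconst δ hδ0 hc]
          exact hBρ x f hfmeas hfbdd ρ (le_refl ρ)
        · exact hBρ x f hfmeas hfbdd δ (le_of_lt hc)
      exact lt_of_lt_of_le hfbig (SI_le_Tmax μ K hBf hq0)
    -- weak (1,1) estimate
    have hb1 : (0:ℝ) < (b:ℝ) + 1 := by positivity
    have hWW := hweak f ((integrable_const 1).indicator hfSmeas) ((b:ℝ)+1) hb1
    have hDnle : μ (Dn n) ≤ ENNReal.ofReal (max C 0 * (μ univ).toReal / ((b:ℝ)+1)) := by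
      refine le_trans (measure_mono hincl) (le_trans hWW (ENNReal.ofReal_le_ofReal ?_))
      have hint : ∫ x, |f x| ∂μ = (μ (Eᶜ \ V)).toReal := SI_int_abs_indicator μ hfSmeas
      rw [hint]
      have h2 : (μ (Eᶜ \ V)).toReal ≤ (μ univ).toReal :=
        ENNReal.toReal_mono (measure_ne_top μ univ) (measure_mono (subset_univ _))
      rcases le_or_gt 0 C with hC | hC
      · rw [max_eq_left hC]
        gcongr
      · rw [max_eq_right (le_of_lt hC), zero_mul, zero_div]
        have h3 : C * (μ (Eᶜ \ V)).toReal ≤ 0 :=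
          mul_nonpos_of_nonpos_of_nonneg (le_of_lt hC) ENNReal.toReal_nonneg
        exact div_nonpos_iff.mpr (Or.inr ⟨h3, le_of_lt hb1⟩)
    exact le_trans (le_of_lt hn) hDnle
  -- let b → ∞
  have htend : Tendsto (fun b : ℕ =>
      ENNReal.ofReal (max C 0 * (μ univ).toReal / ((b:ℝ)+1))) atTop (𝓝 0) := by
    rw [show (0:ℝ≥0∞) = ENNReal.ofReal 0 by simp]
    refine ENNReal.tendsto_ofReal ?_
    have h1 : Tendsto (fun b : ℕ => 1/((b:ℝ)+1)) atTop (𝓝 0) :=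
      tendsto_one_div_add_atTop_nhds_zero_nat
    have h2 := h1.const_mul (max C 0 * (μ univ).toReal)
    rw [mul_zero] at h2
    refine h2.congr fun b => ?_
    field_simp
  have hDpos : (0:ℝ≥0∞) < μ D / 2 := by
    rw [zero_lt_iff]
    intro hc
    rcases ENNReal.div_eq_zero_iff.mp hc with hc1 | hc2
    · exact hpos0 hc1
    · simp at hc2
  have hev : ∀ᶠ b : ℕ in atTop,
      ENNReal.ofReal (max C 0 * (μ univ).toReal / ((b:ℝ)+1)) < μ D / 2 :=
    htend.eventually_lt_const hDpos
  obtain ⟨b, hb1, hb2⟩ := (hev.and (eventually_ge_atTop b₀)).exists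
  exact absurd (key b hb2) (not_le.mpr hb1)


lemma SI_part2 [TopologicalSpace.SeparableSpace X]
    (hK : Measurable fun p : X × X => K p.1 p.2)
    (hKbdd : ∀ δ : ℝ, 0 < δ → ∃ M : ℝ, ∀ x y : X, δ < dist x y → |K x y| ≤ M)
    {C : ℝ}
    (hweak : ∀ f : X → ℝ, Integrable f μ → ∀ t : ℝ, 0 < t →
      μ {x | t < Tmax μ K f x} ≤ ENNReal.ofReal (C * (∫ x, |f x| ∂μ) / t))
    (Ek : ℕ → Set X) (hEkcl : ∀ k, IsClosed (Ek k))
    (hEkconv : ∀ k, ∀ᵐ x ∂μ, x ∈ Ek k → ∃ L : ℝ,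
      Tendsto (fun ε : ℝ => Ttrunc μ K ε ((Ek k).indicator fun _ => (1 : ℝ)) x)
        (𝓝[>] 0) (𝓝 L))
    (hEk0 : Tendsto (fun k => μ (Ek k)ᶜ) atTop (𝓝 0)) :
    ∀ᵐ x ∂μ, ∃ L : ℝ,
      Tendsto (fun ε : ℝ => Ttrunc μ K ε (fun _ => (1 : ℝ)) x) (𝓝[>] 0) (𝓝 L) := by
  set C' : ℝ := max C 0 with hC'def
  have hC'0 : 0 ≤ C' := le_max_right _ _
  -- the unbounded sets
  set Uset : ℕ → Set X := fun k => {x | ∀ b : ℕ, ∃ q : ℚ, 0 < (q:ℝ) ∧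
      (b:ℝ) < |Ttrunc μ K (q:ℝ) ((Ek k)ᶜ.indicator fun _ => (1:ℝ)) x|} with hUdef
  have hU : ∀ k, μ (Uset k ∩ Ek k) = 0 := fun k =>
    SI_unbounded_null μ K hK hKbdd hweak (hEkcl k)
  -- choose a rapidly convergent subsequence
  have hkj : ∀ j : ℕ, ∃ k, μ (Ek k)ᶜ <
      ENNReal.ofReal ((1/2:ℝ)^j / (((j:ℝ)+1)*(C'+1))) := by
    intro j
    have hpos : (0:ℝ≥0∞) < ENNReal.ofReal ((1/2:ℝ)^j / (((j:ℝ)+1)*(C'+1))) :=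
      ENNReal.ofReal_pos.mpr (by positivity)
    exact (hEk0.eventually_lt_const hpos).exists
  choose kj hkjlt using hkj
  set S : ℕ → Set X := fun j =>
    {x | 1/((j:ℝ)+1) < Tmax μ K ((Ek (kj j))ᶜ.indicator fun _ => (1:ℝ)) x} with hSdef
  have hSj : ∀ j, μ (S j) ≤ ENNReal.ofReal ((1/2:ℝ)^j) := by
    intro j
    have ht : (0:ℝ) < 1/((j:ℝ)+1) := by positivity
    refine le_trans (SI_weak_indicator μ K hweak (hEkcl (kj j)).measurableSet.compl ht)
      (ENNReal.ofReal_le_ofReal ?_)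
    have hm : (μ (Ek (kj j))ᶜ).toReal < (1/2:ℝ)^j / (((j:ℝ)+1)*(C'+1)) :=
      (ENNReal.lt_ofReal_iff_toReal_lt (measure_ne_top μ _)).mp (hkjlt j)
    have hm0 : 0 ≤ (μ (Ek (kj j))ᶜ).toReal := ENNReal.toReal_nonneg
    rw [div_div_eq_mul_div, div_one]
    have hj1 : (0:ℝ) < (j:ℝ)+1 := by positivity
    have hC1 : (0:ℝ) < C'+1 := by linarith
    calc C' * (μ (Ek (kj j))ᶜ).toReal * ((j:ℝ)+1)
        ≤ C' * ((1/2:ℝ)^j / (((j:ℝ)+1)*(C'+1))) * ((j:ℝ)+1) := by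
          have := mul_le_mul_of_nonneg_left (le_of_lt hm) hC'0
          exact mul_le_mul_of_nonneg_right this (le_of_lt hj1)
      _ = (1/2:ℝ)^j * (C'/(C'+1)) := by field_simp
      _ ≤ (1/2:ℝ)^j * 1 := by
          refine mul_le_mul_of_nonneg_left ?_ (by positivity)
          rw [div_le_one hC1]; linarith
      _ = (1/2:ℝ)^j := mul_one _
  -- Borel–Cantelli
  set bad : Set X := ⋂ N : ℕ, ⋃ j : ℕ, S (N + j) with hbaddef
  have hofr : ENNReal.ofReal (1/2:ℝ) = (2:ℝ≥0∞)⁻¹ := by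
    rw [show (1/2:ℝ) = (2:ℝ)⁻¹ by norm_num, ENNReal.ofReal_inv_of_pos two_pos]
    norm_num
  have hbad : μ bad = 0 := by
    have hle : ∀ N : ℕ, μ bad ≤ (2:ℝ≥0∞)⁻¹^N * 2 := by
      intro N
      refine le_trans (measure_mono (iInter_subset _ N)) ?_
      refine le_trans (measure_iUnion_le _) ?_
      have h1 : ∀ j : ℕ, μ (S (N + j)) ≤ (2:ℝ≥0∞)⁻¹^(N+j) := by
        intro j
        refine le_trans (hSj (N+j)) ?_
        rw [ENNReal.ofReal_pow (by norm_num), hofr]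
      refine le_trans (ENNReal.tsum_le_tsum h1) ?_
      have h2 : ∀ j : ℕ, (2:ℝ≥0∞)⁻¹^(N+j) = (2:ℝ≥0∞)⁻¹^N * (2:ℝ≥0∞)⁻¹^j := fun j =>
        pow_add _ N j
      rw [tsum_congr h2, ENNReal.tsum_mul_left, ENNReal.tsum_geometric,
        ENNReal.one_sub_inv_two, inv_inv]
    by_contra h0
    have hpos : (0:ℝ≥0∞) < μ bad := zero_lt_iff.mpr h0
    have htend : Tendsto (fun N : ℕ => (2:ℝ≥0∞)⁻¹^N * 2) atTop (𝓝 0) := by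
      have h1 := ENNReal.tendsto_pow_atTop_nhds_zero_of_lt_one
        (show (2:ℝ≥0∞)⁻¹ < 1 by norm_num)
      have h2 := ENNReal.Tendsto.mul_const h1 (Or.inr (by norm_num : (2:ℝ≥0∞) ≠ ⊤))
      rwa [zero_mul] at h2
    obtain ⟨N, hN⟩ := (htend.eventually_lt_const hpos).exists
    exact absurd (hle N) (not_le.mpr hN)
  -- assemble the full measure set
  have h1 : ∀ᵐ x ∂μ, ∀ k, ∃ L : ℝ,
      Tendsto (fun ε : ℝ => Ttrunc μ K ε ((Ek k).indicator fun _ => (1:ℝ)) x)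
        (𝓝[>] 0) (𝓝 L) :=
    ae_all_iff.mpr fun k => SI_ae_conv μ K hK (hEkcl k) (hEkconv k)
  have h2 : ∀ᵐ x ∂μ, ∀ k, x ∉ Uset k ∩ Ek k :=
    ae_all_iff.mpr fun k => (measure_eq_zero_iff_ae_notMem).mp (hU k)
  have h3 : ∀ᵐ x ∂μ, x ∈ ⋃ k, Ek k := by
    have hz : μ (⋃ k, Ek k)ᶜ = 0 := by
      have hsub : ∀ k, (⋃ k, Ek k)ᶜ ⊆ (Ek k)ᶜ := by
        intro k
        exact compl_subset_compl.mpr (subset_iUnion _ k)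
      have : μ (⋃ k, Ek k)ᶜ ≤ 0 :=
        ge_of_tendsto' hEk0 fun k => measure_mono (hsub k)
      exact le_antisymm this (zero_le)
    have := (measure_eq_zero_iff_ae_notMem).mp hz
    refine this.mono fun x hx => ?_
    by_contra hc
    exact hx hc
  have h4 : ∀ᵐ x ∂μ, x ∉ bad := (measure_eq_zero_iff_ae_notMem).mp hbad
  filter_upwards [h1, h2, h3, h4] with x hx1 hx2 hx3 hx4
  -- pointwise endgame
  obtain ⟨k₀, hk₀⟩ := mem_iUnion.mp hx3
  have hnotU : x ∉ Uset k₀ := fun hc => hx2 k₀ (Set.mem_inter hc hk₀)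
  have hratbd : ∃ b : ℕ, ∀ q : ℚ, 0 < (q:ℝ) →
      |Ttrunc μ K (q:ℝ) ((Ek k₀)ᶜ.indicator fun _ => (1:ℝ)) x| ≤ (b:ℝ) := by
    rw [hUdef] at hnotU
    simp only [mem_setOf_eq, not_forall] at hnotU
    obtain ⟨b, hb⟩ := hnotU
    push_neg at hb
    exact ⟨b, hb⟩
  obtain ⟨b, hb⟩ := hratbd
  have hfull₀ : ∀ δ : ℝ, 0 < δ →
      |Ttrunc μ K δ ((Ek k₀)ᶜ.indicator fun _ => (1:ℝ)) x| ≤ (b:ℝ) := by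
    intro δ hδ
    exact SI_rat_transfer μ K hK hKbdd x (SI_indicator_meas (hEkcl k₀).measurableSet.compl)
      (SI_indicator_bdd _) hb hδ
  have hEkbd : ∀ k, ∃ Bk : ℝ, ∀ δ : ℝ, 0 < δ →
      |Ttrunc μ K δ ((Ek k).indicator fun _ => (1:ℝ)) x| ≤ Bk := fun k =>
    SI_full_bound_of_tendsto μ K hK hKbdd (SI_indicator_meas (hEkcl k).measurableSet)
      (SI_indicator_bdd _) (hx1 k)
  obtain ⟨B₀, hB₀⟩ := hEkbd k₀
  have hdec : ∀ k, ∀ δ : ℝ, 0 < δ → Ttrunc μ K δ (fun _ => (1:ℝ)) x =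
      Ttrunc μ K δ ((Ek k).indicator fun _ => (1:ℝ)) x +
      Ttrunc μ K δ ((Ek k)ᶜ.indicator fun _ => (1:ℝ)) x := fun k δ hδ =>
    SI_one_decomp μ K hK hKbdd x hδ (hEkcl k).measurableSet
  have hckbd : ∀ k, ∃ Bc : ℝ, ∀ δ : ℝ, 0 < δ →
      |Ttrunc μ K δ ((Ek k)ᶜ.indicator fun _ => (1:ℝ)) x| ≤ Bc := by
    intro k
    obtain ⟨Bk, hBk⟩ := hEkbd k
    refine ⟨(b:ℝ) + B₀ + Bk, fun δ hδ => ?_⟩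
    have e1 := hdec k δ hδ
    have e2 := hdec k₀ δ hδ
    have hident : Ttrunc μ K δ ((Ek k)ᶜ.indicator fun _ => (1:ℝ)) x =
        Ttrunc μ K δ ((Ek k₀)ᶜ.indicator fun _ => (1:ℝ)) x +
        Ttrunc μ K δ ((Ek k₀).indicator fun _ => (1:ℝ)) x -
        Ttrunc μ K δ ((Ek k).indicator fun _ => (1:ℝ)) x := by linarith
    rw [hident]
    have t1 := hfull₀ δ hδ
    have t2 := hB₀ δ hδ
    have t3 := hBk δ hδ
    have h5 := abs_add_le (Ttrunc μ K δ ((Ek k₀)ᶜ.indicator fun _ => (1:ℝ)) x)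
      (Ttrunc μ K δ ((Ek k₀).indicator fun _ => (1:ℝ)) x)
    have h6 := abs_sub (Ttrunc μ K δ ((Ek k₀)ᶜ.indicator fun _ => (1:ℝ)) x +
        Ttrunc μ K δ ((Ek k₀).indicator fun _ => (1:ℝ)) x)
      (Ttrunc μ K δ ((Ek k).indicator fun _ => (1:ℝ)) x)
    linarith
  -- Borel–Cantelli conclusion at x
  have hxS : ∃ N : ℕ, ∀ j : ℕ, x ∉ S (N + j) := by
    rw [hbaddef] at hx4
    simp only [mem_iInter, not_forall, mem_iUnion] at hx4
    obtain ⟨N, hN⟩ := hx4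
    refine ⟨N, fun j hj => hN ⟨j, hj⟩⟩
  obtain ⟨N, hN⟩ := hxS
  -- Cauchy
  have hcauchy : Cauchy (map (fun ε : ℝ => Ttrunc μ K ε (fun _ => (1:ℝ)) x)
      (𝓝[>] (0:ℝ))) := by
    rw [cauchy_map_iff]
    refine ⟨inferInstance, ?_⟩
    rw [Metric.uniformity_basis_dist.tendsto_right_iff]
    intro θ hθ
    obtain ⟨n₁, hn₁⟩ := exists_nat_one_div_lt (show (0:ℝ) < θ/4 by linarith)
    set j := N + n₁ with hjdef
    have hjv : 1/((j:ℝ)+1) < θ/4 := by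
      refine lt_of_le_of_lt ?_ hn₁
      have h7 : ((n₁:ℝ)+1) ≤ ((j:ℝ)+1) := by
        rw [hjdef]; push_cast; linarith [Nat.cast_nonneg (α := ℝ) N]
      exact one_div_le_one_div_of_le (by positivity) h7
    have hTm : Tmax μ K ((Ek (kj j))ᶜ.indicator fun _ => (1:ℝ)) x ≤ 1/((j:ℝ)+1) := by
      have := hN n₁
      rw [hSdef] at this
      simp only [mem_setOf_eq, not_lt] at this
      exact this
    obtain ⟨Bc, hBc⟩ := hckbd (kj j)
    have hsmall : ∀ δ : ℝ, 0 < δ →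
        |Ttrunc μ K δ ((Ek (kj j))ᶜ.indicator fun _ => (1:ℝ)) x| < θ/4 := by
      intro δ hδ
      exact lt_of_le_of_lt (le_trans (SI_le_Tmax μ K hBc hδ) hTm) hjv
    obtain ⟨L', hL'⟩ := hx1 (kj j)
    have hev : ∀ᶠ ε : ℝ in 𝓝[>] (0:ℝ),
        |Ttrunc μ K ε ((Ek (kj j)).indicator fun _ => (1:ℝ)) x - L'| < θ/8 ∧ 0 < ε := by
      have hb1 : ∀ᶠ z : ℝ in 𝓝 L', |z - L'| < θ/8 := by
        refine Filter.eventually_of_mem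
          (Metric.ball_mem_nhds L' (by linarith : (0:ℝ) < θ/8)) (fun z hz => ?_)
        rwa [mem_ball, Real.dist_eq] at hz
      exact (hL'.eventually hb1).and
        (eventually_mem_nhdsWithin.mono fun ε (hε : ε ∈ Ioi (0:ℝ)) => hε)
    have hev2 := (hev.prod_inl (𝓝[>] (0:ℝ))).and (hev.prod_inr (𝓝[>] (0:ℝ)))
    refine hev2.mono fun p hp => ?_
    obtain ⟨⟨hp1a, hp1b⟩, hp2a, hp2b⟩ := hp
    simp only [Set.mem_setOf_eq]
    rw [Real.dist_eq]
    have e1 := hdec (kj j) p.1 hp1b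
    have e2 := hdec (kj j) p.2 hp2b
    have s1 := hsmall p.1 hp1b
    have s2 := hsmall p.2 hp2b
    have habs : |Ttrunc μ K p.1 (fun _ => (1:ℝ)) x - Ttrunc μ K p.2 (fun _ => (1:ℝ)) x|
        ≤ |Ttrunc μ K p.1 ((Ek (kj j)).indicator fun _ => (1:ℝ)) x - L'| +
          |Ttrunc μ K p.2 ((Ek (kj j)).indicator fun _ => (1:ℝ)) x - L'| +
          |Ttrunc μ K p.1 ((Ek (kj j))ᶜ.indicator fun _ => (1:ℝ)) x| +
          |Ttrunc μ K p.2 ((Ek (kj j))ᶜ.indicator fun _ => (1:ℝ)) x| := by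
      set A1 := Ttrunc μ K p.1 ((Ek (kj j)).indicator fun _ => (1:ℝ)) x
      set A2 := Ttrunc μ K p.2 ((Ek (kj j)).indicator fun _ => (1:ℝ)) x
      set B1 := Ttrunc μ K p.1 ((Ek (kj j))ᶜ.indicator fun _ => (1:ℝ)) x
      set B2 := Ttrunc μ K p.2 ((Ek (kj j))ᶜ.indicator fun _ => (1:ℝ)) x
      rw [e1, e2]
      have step : A1 + B1 - (A2 + B2) = ((A1 - L') - (A2 - L')) + B1 - B2 := by ring
      rw [step]
      have u1 := abs_add_le ((A1 - L') - (A2 - L')) B1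
      have u2 := abs_sub ((A1 - L') - (A2 - L') + B1) B2
      have u3 := abs_sub (A1 - L') (A2 - L')
      linarith
    linarith
  obtain ⟨L, hL⟩ := CompleteSpace.complete hcauchy
  exact ⟨L, hL⟩

end Helpers

/-- assuming the weak (1,1) inequality for `T*`, if `E` is a
closed set on which `T_ε(χ_E)` converges `μ`-a.e., then the oscillation of
`T_ε(1)` exceeds `t` on a set of measure at most `2C μ(X∖E)/t`; consequently,
if closed sets `E_k` with `μ(X∖E_k) → 0` and this a.e. convergence exist,
then `lim_{ε→0} T_ε(1)(x)` exists for `μ`-a.e. `x`. -/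
theorem oscillation_bound_and_ae_convergence
    {X : Type*} [MetricSpace X] [TopologicalSpace.SeparableSpace X]
    [MeasurableSpace X] [BorelSpace X]
    (μ : Measure X) [IsFiniteMeasure μ]
    (K : X → X → ℝ)
    (hKmeas : Measurable (fun p : X × X => K p.1 p.2))
    (hKanti : ∀ x y : X, x ≠ y → K x y = -K y x)
    (hKbdd : ∀ δ : ℝ, 0 < δ → ∃ M : ℝ, ∀ x y : X, δ < dist x y → |K x y| ≤ M)
    (C : ℝ)
    (hweak : ∀ f : X → ℝ, Integrable f μ → ∀ t : ℝ, 0 < t →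
      μ {x | t < Tmax μ K f x} ≤ ENNReal.ofReal (C * (∫ x, |f x| ∂μ) / t)) :
    (∀ E : Set X, IsClosed E →
      (∀ᵐ x ∂μ, x ∈ E → ∃ L : ℝ,
        Tendsto (fun ε : ℝ => Ttrunc μ K ε (E.indicator fun _ => (1 : ℝ)) x)
          (𝓝[>] 0) (𝓝 L)) →
      ∀ t : ℝ, 0 < t →
        μ {x | t < Filter.limsup
            (fun p : ℝ × ℝ =>
              |Ttrunc μ K p.1 (fun _ => (1 : ℝ)) x -
                Ttrunc μ K p.2 (fun _ => (1 : ℝ)) x|)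
            ((𝓝[>] (0 : ℝ)) ×ˢ (𝓝[>] (0 : ℝ)))} ≤
          ENNReal.ofReal (2 * C * (μ Eᶜ).toReal / t)) ∧
    (∀ Ek : ℕ → Set X,
      (∀ k, IsClosed (Ek k)) →
      (∀ k, ∀ᵐ x ∂μ, x ∈ Ek k → ∃ L : ℝ,
        Tendsto (fun ε : ℝ => Ttrunc μ K ε ((Ek k).indicator fun _ => (1 : ℝ)) x)
          (𝓝[>] 0) (𝓝 L)) →
      Tendsto (fun k => μ (Ek k)ᶜ) atTop (𝓝 0) →
      ∀ᵐ x ∂μ, ∃ L : ℝ,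
        Tendsto (fun ε : ℝ => Ttrunc μ K ε (fun _ => (1 : ℝ)) x)
          (𝓝[>] 0) (𝓝 L)) := by
  constructor
  · intro E hE hae t ht
    exact SI_part1 μ K hKmeas hKbdd hweak hE hae ht
  · intro Ek hEkcl hEkconv hEk0
    exact SI_part2 μ K hKmeas hKbdd hweak Ek hEkcl hEkconv hEk0
end
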